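/- arXiv:1909.04284 — 8 statements merged into one kernel-verified Lean document; each statement's English description precedes it below -/
import Mathlib

section
/- Let p ≥ 3 be a prime, let q, k ≥ 1 be natural numbers and θ ∈ ℚ_p with |q|_p < 1, |θ − 1|_p < 1, and |k|_p ≤ |q + θ − 1|_p. Then for every x ∈ ℚ_p with x ≠ 2 − q − θ, all iterates satisfy f^n(x) ≠ 2 − q − θ and f^n(x) → 1 as n → ∞; in particular x₀* = 1 is the unique fixed point of f on ℚ_p \ {2 − q − θ}. -/
section PBAux

variable {p : ℕ} [hp : Fact p.Prime]

lemma pb_norm_le_inv_p {x : ℚ_[p]} (hx : ‖x‖ < 1) : ‖x‖ ≤ (p : ℝ)⁻¹ := by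
  rcases eq_or_ne x 0 with h | h
  · simp [h]
  · have hp1 : (1 : ℝ) < p := by exact_mod_cast hp.out.one_lt
    rw [Padic.norm_eq_zpow_neg_valuation h] at hx ⊢
    have : -x.valuation < 0 := by
      by_contra hc
      push_neg at hc
      exact absurd (one_le_zpow₀ (le_of_lt hp1) hc) (not_le.mpr hx)
    have h1 : -x.valuation ≤ -1 := by omega
    calc (p : ℝ) ^ (-x.valuation) ≤ (p : ℝ) ^ (-1 : ℤ) :=
          zpow_le_zpow_right₀ (le_of_lt hp1) h1
      _ = (p : ℝ)⁻¹ := by simp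

lemma pb_nat_norm_le_one (m : ℕ) : ‖(m : ℚ_[p])‖ ≤ 1 := by
  have := Padic.norm_int_le_one (p := p) (m : ℤ)
  simpa using this

lemma pb_norm_sum_le {ι : Type*} (s : Finset ι) (f : ι → ℚ_[p]) {B : ℝ} (hB : 0 ≤ B)
    (h : ∀ i ∈ s, ‖f i‖ ≤ B) : ‖∑ i ∈ s, f i‖ ≤ B := by
  classical
  induction s using Finset.induction_on with
  | empty => simpa using hB
  | @insert a s ha ih =>
    rw [Finset.sum_insert ha]
    refine le_trans (Padic.nonarchimedean _ _) (max_le (h a (by simp)) ?_)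
    exact ih fun i hi => h i (by simp [hi])

lemma pb_inv_le_nat_norm (m : ℕ) (hm : m ≠ 0) : ((m : ℝ))⁻¹ ≤ ‖(m : ℚ_[p])‖ := by
  have hpp := hp.out
  set v := padicValNat p m with hv
  have hfac : p ^ v * (m / p ^ v) = m := by
    have := Nat.ordProj_mul_ordCompl_eq_self m p
    rwa [Nat.factorization_def m hpp] at this
  have hnd : ¬ (p : ℤ) ∣ ((m / p ^ v : ℕ) : ℤ) := by
    have := Nat.not_dvd_ordCompl hpp hm
    rw [Nat.factorization_def m hpp] at this
    exact_mod_cast this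
  have hunit : ‖((m / p ^ v : ℕ) : ℚ_[p])‖ = 1 := by
    have hle := pb_nat_norm_le_one (p := p) (m / p ^ v)
    rcases lt_or_eq_of_le hle with hlt | heq
    · exfalso
      apply hnd
      rw [← Padic.norm_intCast_lt_one_iff]
      rw [Int.cast_natCast]
      exact hlt
    · exact heq
  have hnorm : ‖(m : ℚ_[p])‖ = ((p : ℝ) ^ v)⁻¹ := by
    conv_lhs => rw [← hfac]
    push_cast
    rw [norm_mul, norm_pow, Padic.norm_p, hunit, mul_one, inv_pow]
  rw [hnorm]
  have hple : (p : ℝ) ^ v ≤ (m : ℝ) := by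
    have : p ^ v ≤ m := Nat.le_of_dvd (Nat.pos_of_ne_zero hm) ⟨_, hfac.symm⟩
    exact_mod_cast this
  have hp0 : (0:ℝ) < (p:ℝ) := by exact_mod_cast hp.out.pos
  exact inv_anti₀ (pow_pos hp0 v) hple

lemma pb_binom_bound (k : ℕ) (t : ℚ_[p]) (ht : ‖t‖ ≤ (p : ℝ)⁻¹) :
    ‖(1 + t) ^ k - 1‖ ≤ ‖(k : ℚ_[p])‖ * ‖t‖ := by
  rcases Nat.eq_zero_or_pos k with hk0 | hk1
  · simp [hk0]
  have hpR : (0 : ℝ) < p := by exact_mod_cast hp.out.pos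
  have hexp : (1 + t) ^ k - 1 = ∑ j ∈ Finset.range k, (k.choose (j+1) : ℚ_[p]) * t ^ (j+1) := by
    rw [add_comm (1 : ℚ_[p]) t, add_pow]
    rw [Finset.sum_range_succ' (fun j => t ^ j * 1 ^ (k - j) * (k.choose j : ℚ_[p])) k]
    simp [mul_comm]
  rw [hexp]
  apply pb_norm_sum_le _ _ (by positivity)
  intro j _
  -- per-term bound
  have hkey : ((j+1 : ℕ) : ℚ_[p]) * (k.choose (j+1) : ℚ_[p]) =
      (k : ℚ_[p]) * ((k-1).choose j : ℚ_[p]) := by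
    have := Nat.add_one_mul_choose_eq (k-1) j
    have hks : k - 1 + 1 = k := by omega
    rw [hks] at this
    have h2 : k * (k-1).choose j = (j+1) * k.choose (j+1) := by
      simpa [Nat.succ_eq_add_one, mul_comm] using this
    exact_mod_cast (congrArg (fun n : ℕ => (n : ℚ_[p])) h2).symm
  have hnorm_eq : ‖((j+1 : ℕ) : ℚ_[p])‖ * ‖(k.choose (j+1) : ℚ_[p])‖ ≤ ‖(k : ℚ_[p])‖ := by
    rw [← norm_mul, hkey, norm_mul]
    calc ‖(k : ℚ_[p])‖ * ‖((k-1).choose j : ℚ_[p])‖ ≤ ‖(k : ℚ_[p])‖ * 1 :=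
          mul_le_mul_of_nonneg_left (pb_nat_norm_le_one _) (norm_nonneg _)
      _ = ‖(k : ℚ_[p])‖ := mul_one _
  have htj : ‖t‖ ^ j ≤ ‖((j+1 : ℕ) : ℚ_[p])‖ := by
    calc ‖t‖ ^ j ≤ ((p : ℝ)⁻¹) ^ j := pow_le_pow_left₀ (norm_nonneg _) ht j
      _ ≤ ((j+1 : ℕ) : ℝ)⁻¹ := by
          rw [inv_pow]
          apply inv_anti₀ (by positivity)
          have : j + 1 ≤ p ^ j := Nat.succ_le_of_lt (Nat.lt_pow_self (n := j) hp.out.one_lt)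
          exact_mod_cast this
      _ ≤ ‖((j+1 : ℕ) : ℚ_[p])‖ := pb_inv_le_nat_norm _ (by omega)
  calc ‖(k.choose (j+1) : ℚ_[p]) * t ^ (j+1)‖
      = ‖(k.choose (j+1) : ℚ_[p])‖ * (‖t‖ ^ j * ‖t‖) := by
        rw [norm_mul, norm_pow, pow_succ]
    _ = (‖(k.choose (j+1) : ℚ_[p])‖ * ‖t‖ ^ j) * ‖t‖ := by ring
    _ ≤ (‖(k.choose (j+1) : ℚ_[p])‖ * ‖((j+1:ℕ) : ℚ_[p])‖) * ‖t‖ := by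
        apply mul_le_mul_of_nonneg_right _ (norm_nonneg _)
        exact mul_le_mul_of_nonneg_left htj (norm_nonneg _)
    _ ≤ ‖(k : ℚ_[p])‖ * ‖t‖ := by
        apply mul_le_mul_of_nonneg_right _ (norm_nonneg _)
        rw [mul_comm]; exact hnorm_eq

lemma pb_pow_p_pow_bound (a : ℕ) (z : ℚ_[p]) (hz : ‖z‖ ≤ (p : ℝ)⁻¹) :
    ‖(1 + z) ^ (p ^ a) - 1‖ ≤ ((p : ℝ)⁻¹) ^ a * ‖z‖ := by
  have hp1 : (1 : ℝ) < p := by exact_mod_cast hp.out.one_lt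
  have hinv1 : (p : ℝ)⁻¹ ≤ 1 := by
    rw [inv_le_one_iff₀]; right; linarith
  have hinv0 : (0:ℝ) ≤ (p:ℝ)⁻¹ := by positivity
  induction a with
  | zero => simp
  | succ a ih =>
    have hw : ‖(1 + z) ^ (p ^ a) - 1‖ ≤ ((p : ℝ)⁻¹) ^ a * ‖z‖ := ih
    set w := (1 + z) ^ (p ^ a) - 1 with hwdef
    have hw1 : ‖w‖ ≤ (p : ℝ)⁻¹ := by
      calc ‖w‖ ≤ ((p : ℝ)⁻¹) ^ a * ‖z‖ := hw
        _ ≤ 1 * (p : ℝ)⁻¹ := by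
            apply mul_le_mul (pow_le_one₀ hinv0 hinv1) hz (norm_nonneg _) zero_le_one
        _ = (p : ℝ)⁻¹ := one_mul _
    have hrw : (1 + z) ^ (p ^ (a+1)) = (1 + w) ^ p := by
      rw [hwdef]
      rw [add_sub_cancel]
      rw [← pow_mul, pow_succ]
    rw [hrw]
    calc ‖(1 + w) ^ p - 1‖ ≤ ‖(p : ℚ_[p])‖ * ‖w‖ := pb_binom_bound p w hw1
      _ = (p : ℝ)⁻¹ * ‖w‖ := by rw [Padic.norm_p]
      _ ≤ (p : ℝ)⁻¹ * (((p : ℝ)⁻¹) ^ a * ‖z‖) := mul_le_mul_of_nonneg_left hw hinv0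
      _ = ((p : ℝ)⁻¹) ^ (a+1) * ‖z‖ := by ring

lemma pb_norm_pow_sub_one_ne {k : ℕ} (hk : 1 ≤ k) {E : ℝ} (hE : ‖(k : ℚ_[p])‖ ≤ E)
    (hE1 : E < 1) (s : ℚ_[p]) : ‖s ^ k - 1‖ ≠ E := by
  intro hcon
  have hp1 : (1 : ℝ) < p := by exact_mod_cast hp.out.one_lt
  have hk0 : (k : ℚ_[p]) ≠ 0 := Nat.cast_ne_zero.mpr (by omega)
  have hkpos : (0:ℝ) < ‖(k : ℚ_[p])‖ := norm_pos_iff.mpr hk0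
  -- first: ‖s^k‖ must be 1
  have hsk1 : ‖s ^ k‖ = 1 := by
    by_contra hne
    have : ‖s ^ k - 1‖ = max ‖s ^ k‖ ‖(1 : ℚ_[p])‖ := by
      rw [sub_eq_add_neg]
      rw [Padic.add_eq_max_of_ne (by simpa using hne)]
      simp
    have hge : (1:ℝ) ≤ ‖s ^ k - 1‖ := by
      rw [this]; simp
    linarith [hcon ▸ hge]
  have hs1 : ‖s‖ = 1 := by
    rw [norm_pow] at hsk1
    have h1 : ‖s‖ ^ k = 1 := by simpa using hsk1
    rcases lt_trichotomy ‖s‖ 1 with hlt | heq | hgt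
    · have := pow_lt_one₀ (norm_nonneg s) hlt (by omega : k ≠ 0)
      rw [h1] at this; linarith
    · exact heq
    · have := one_lt_pow₀ hgt (by omega : k ≠ 0)
      rw [h1] at this; linarith
  -- residue field argument
  set a := padicValNat p k with ha
  set m := k / p ^ a with hm
  have hfac : p ^ a * m = k := by
    have := Nat.ordProj_mul_ordCompl_eq_self k p
    rwa [Nat.factorization_def k hp.out] at this
  have hmnd : ¬ (p ∣ m) := by
    have := Nat.not_dvd_ordCompl hp.out (by omega : k ≠ 0)
    rwa [Nat.factorization_def k hp.out] at this
  have hm0 : m ≠ 0 := by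
    intro h0
    rw [h0, mul_zero] at hfac
    omega
  -- ‖(k:ℚ_p)‖ = p⁻¹ ^ a
  have hknorm : ‖(k : ℚ_[p])‖ = ((p : ℝ)⁻¹) ^ a := by
    conv_lhs => rw [← hfac]
    push_cast
    rw [norm_mul, norm_pow, Padic.norm_p]
    have hmu : ‖(m : ℚ_[p])‖ = 1 := by
      rcases lt_or_eq_of_le (pb_nat_norm_le_one (p := p) m) with hlt | heq
      · exfalso
        apply hmnd
        have := (Padic.norm_intCast_lt_one_iff (p := p) (k := (m : ℤ))).mp
          (by rw [Int.cast_natCast]; exact hlt)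
        exact_mod_cast this
      · exact heq
    rw [hmu, mul_one]
  -- S : ℤ_p
  set S : ℤ_[p] := ⟨s, le_of_eq hs1⟩ with hS
  have hcoe : ∀ n : ℕ, ((S ^ n - 1 : ℤ_[p]) : ℚ_[p]) = s ^ n - 1 := by
    intro n; push_cast [hS]; rfl
  have hmem : ∀ x : ℤ_[p], PadicInt.toZMod x = 0 ↔ ‖x‖ < 1 := by
    intro x
    rw [← RingHom.mem_ker, PadicInt.ker_toZMod, PadicInt.maximalIdeal_eq_span_p,
      Ideal.mem_span_singleton, ← PadicInt.norm_lt_one_iff_dvd]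
  have hSk : PadicInt.toZMod (S ^ k - 1) = 0 := by
    rw [hmem]
    rw [PadicInt.norm_def, hcoe, hcon]
    exact hE1
  have hu : (PadicInt.toZMod S) ^ k = 1 := by
    have := hSk
    rw [map_sub, map_pow, map_one, sub_eq_zero] at this
    exact this
  have hune : PadicInt.toZMod S ≠ 0 := by
    intro h0
    rw [h0, zero_pow (by omega : k ≠ 0)] at hu
    exact one_ne_zero hu.symm
  -- (u^m)^(p^a) = 1 and u^m has order dividing p-1
  set u := PadicInt.toZMod S with hudef
  have hum : (u ^ m) ^ (p ^ a) = 1 := by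
    rw [← pow_mul, mul_comm, hfac, hu]
  have hum2 : (u ^ m) ^ (p - 1) = 1 := by
    rw [← pow_mul, mul_comm, pow_mul, ZMod.pow_card_sub_one_eq_one hune, one_pow]
  have hord1 : orderOf (u ^ m) ∣ p ^ a := orderOf_dvd_of_pow_eq_one hum
  have hord2 : orderOf (u ^ m) ∣ p - 1 := orderOf_dvd_of_pow_eq_one hum2
  have hcop : Nat.Coprime (p ^ a) (p - 1) := by
    apply Nat.Coprime.pow_left
    have hpeq : p - 1 + 1 = p := by have := hp.out.two_le; omega
    rw [← hpeq]
    simp [Nat.coprime_self_add_left]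
  have hord : orderOf (u ^ m) = 1 := Nat.eq_one_of_dvd_coprimes hcop hord1 hord2
  have humeq : u ^ m = 1 := orderOf_eq_one_iff.mp hord
  -- so ‖s^m - 1‖ ≤ p⁻¹
  have hsm : ‖s ^ m - 1‖ ≤ (p : ℝ)⁻¹ := by
    apply pb_norm_le_inv_p
    rw [← hcoe, ← PadicInt.norm_def]
    rw [← hmem]
    rw [map_sub, map_pow, map_one, sub_eq_zero, humeq]
  -- now bound ‖s^k - 1‖
  have hsk : s ^ k = (1 + (s ^ m - 1)) ^ (p ^ a) := by
    rw [add_sub_cancel, ← pow_mul, mul_comm, hfac]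
  have hfinal : ‖s ^ k - 1‖ ≤ ((p : ℝ)⁻¹) ^ a * (p : ℝ)⁻¹ := by
    rw [hsk]
    calc ‖(1 + (s ^ m - 1)) ^ (p ^ a) - 1‖ ≤ ((p : ℝ)⁻¹) ^ a * ‖s ^ m - 1‖ :=
          pb_pow_p_pow_bound a _ hsm
      _ ≤ ((p : ℝ)⁻¹) ^ a * (p : ℝ)⁻¹ := mul_le_mul_of_nonneg_left hsm (by positivity)
  have hlt : ((p : ℝ)⁻¹) ^ a * (p : ℝ)⁻¹ < ((p : ℝ)⁻¹) ^ a := by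
    have h0 : (0:ℝ) < ((p : ℝ)⁻¹) ^ a := by positivity
    have h1 : (p : ℝ)⁻¹ < 1 := by
      rw [inv_lt_one_iff₀]; right; exact hp1
    nlinarith
  rw [hcon] at hfinal
  rw [hknorm] at hE
  linarith
end PBAux

/-- The Potts–Bethe mapping on `ℚ_[p]` (with total division, so defined everywhere). -/
noncomputable def pottsBethe (p : ℕ) [Fact p.Prime] (q k : ℕ) (θ : ℚ_[p]) : ℚ_[p] → ℚ_[p] :=
  fun x => ((θ * x + (q : ℚ_[p]) - 1) / (x + θ + (q : ℚ_[p]) - 2)) ^ k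

theorem stmt0 (p : ℕ) [Fact p.Prime] (hp : 3 ≤ p) (q k : ℕ) (hq : 1 ≤ q) (hk : 1 ≤ k)
    (θ : ℚ_[p]) (hqnorm : ‖(q : ℚ_[p])‖ < 1) (hθ : ‖θ - 1‖ < 1)
    (hkq : ‖(k : ℚ_[p])‖ ≤ ‖(q : ℚ_[p]) + θ - 1‖) :
    (∀ x : ℚ_[p], x ≠ 2 - (q : ℚ_[p]) - θ →
      (∀ n : ℕ, (pottsBethe p q k θ)^[n] x ≠ 2 - (q : ℚ_[p]) - θ) ∧
      Filter.Tendsto (fun n => (pottsBethe p q k θ)^[n] x) Filter.atTop (nhds 1)) ∧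
    pottsBethe p q k θ 1 = 1 ∧
    (∀ x : ℚ_[p], x ≠ 2 - (q : ℚ_[p]) - θ → pottsBethe p q k θ x = x → x = 1) := by
  have hprime : p.Prime := Fact.out
  have hp1R : (1 : ℝ) < p := by exact_mod_cast hprime.one_lt
  set f := pottsBethe p q k θ with hf
  set ε : ℚ_[p] := (q : ℚ_[p]) + θ - 1 with hε
  have hk0 : (k : ℚ_[p]) ≠ 0 := Nat.cast_ne_zero.mpr (by omega)
  have hknorm : 0 < ‖(k : ℚ_[p])‖ := norm_pos_iff.mpr hk0
  have hEpos : 0 < ‖ε‖ := lt_of_lt_of_le hknorm hkq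
  have hε0 : ε ≠ 0 := norm_pos_iff.mp hEpos
  have hE1 : ‖ε‖ < 1 := by
    have hεq : ε = (q : ℚ_[p]) + (θ - 1) := by rw [hε]; ring
    rw [hεq]
    calc ‖(q : ℚ_[p]) + (θ - 1)‖ ≤ max ‖(q : ℚ_[p])‖ ‖θ - 1‖ := Padic.nonarchimedean _ _
      _ < 1 := max_lt hqnorm hθ
  have hδp : ‖θ - 1‖ ≤ (p : ℝ)⁻¹ := pb_norm_le_inv_p hθ
  have hpinv1 : (p : ℝ)⁻¹ < 1 := by rw [inv_lt_one_iff₀]; right; exact hp1R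
  have hpole : (2 : ℚ_[p]) - (q : ℚ_[p]) - θ = 1 - ε := by rw [hε]; ring
  set Y : ℚ_[p] → ℚ_[p] := fun x => (x - 1) / (x - 1 + ε) with hY
  -- the one-step lemma
  have step : ∀ x : ℚ_[p], x ≠ 1 - ε →
      f x ≠ 1 - ε ∧ ‖Y (f x)‖ ≤ 1 ∧
        (‖Y x‖ ≤ 1 → ‖Y (f x)‖ ≤ ‖θ - 1‖ * ‖Y x‖) := by
    intro x hx
    have hB : x - 1 + ε ≠ 0 := by
      intro h; apply hx; linear_combination h
    set s : ℚ_[p] := (θ * x + (q : ℚ_[p]) - 1) / (x - 1 + ε) with hs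
    have hden : x + θ + (q : ℚ_[p]) - 2 = x - 1 + ε := by rw [hε]; ring
    have hfx : f x = s ^ k := by
      rw [hf]; simp only [pottsBethe]; rw [hden, hs]
    have hsY : s = 1 + (θ - 1) * Y x := by
      rw [hs]; simp only [hY]
      field_simp
      ring
    set G := s ^ k - 1 with hG
    have hGne : ‖G‖ ≠ ‖ε‖ := pb_norm_pow_sub_one_ne hk hkq hE1 s
    have hfp : f x ≠ 1 - ε := by
      intro h
      apply hGne
      rw [hfx] at h
      have hh : G = -ε := by rw [hG]; linear_combination h
      rw [hh, norm_neg]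
    have hGε : G + ε ≠ 0 := by
      intro h
      apply hfp
      rw [hfx]
      have hh : s ^ k = 1 - ε := by linear_combination h - hG
      rw [hh]
    have hmax : ‖G + ε‖ = max ‖G‖ ‖ε‖ := Padic.add_eq_max_of_ne hGne
    have hYfx : Y (f x) = G / (G + ε) := by
      rw [hfx]
    refine ⟨hfp, ?_, ?_⟩
    · rw [hYfx, norm_div, hmax]
      apply div_le_one_of_le₀ (le_max_left _ _) (le_max_of_le_right (le_of_lt hEpos))
    · intro hYx1
      have ht : ‖(θ - 1) * Y x‖ ≤ (p : ℝ)⁻¹ := by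
        rw [norm_mul]
        calc ‖θ - 1‖ * ‖Y x‖ ≤ ‖θ - 1‖ * 1 :=
              mul_le_mul_of_nonneg_left hYx1 (norm_nonneg _)
          _ = ‖θ - 1‖ := mul_one _
          _ ≤ (p : ℝ)⁻¹ := hδp
      have hGb : ‖G‖ ≤ ‖ε‖ * (‖θ - 1‖ * ‖Y x‖) := by
        rw [hG, hsY]
        calc ‖(1 + (θ - 1) * Y x) ^ k - 1‖ ≤ ‖(k : ℚ_[p])‖ * ‖(θ - 1) * Y x‖ :=
              pb_binom_bound k _ ht
          _ ≤ ‖ε‖ * ‖(θ - 1) * Y x‖ := mul_le_mul_of_nonneg_right hkq (norm_nonneg _)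
          _ = ‖ε‖ * (‖θ - 1‖ * ‖Y x‖) := by rw [norm_mul]
      have hGlt : ‖G‖ < ‖ε‖ := by
        have h1 : ‖θ - 1‖ * ‖Y x‖ ≤ (p : ℝ)⁻¹ := by rw [← norm_mul]; exact ht
        calc ‖G‖ ≤ ‖ε‖ * (‖θ - 1‖ * ‖Y x‖) := hGb
          _ ≤ ‖ε‖ * (p : ℝ)⁻¹ := mul_le_mul_of_nonneg_left h1 (norm_nonneg _)
          _ < ‖ε‖ * 1 := by
              apply mul_lt_mul_of_pos_left hpinv1 hEpos
          _ = ‖ε‖ := mul_one _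
      have hmaxε : ‖G + ε‖ = ‖ε‖ := by rw [hmax, max_eq_right (le_of_lt hGlt)]
      rw [hYfx, norm_div, hmaxε, div_le_iff₀ hEpos]
      calc ‖G‖ ≤ ‖ε‖ * (‖θ - 1‖ * ‖Y x‖) := hGb
        _ = ‖θ - 1‖ * ‖Y x‖ * ‖ε‖ := by ring
  -- main convergence statement
  have main : ∀ x : ℚ_[p], x ≠ 1 - ε →
      (∀ n : ℕ, f^[n] x ≠ 1 - ε) ∧
      Filter.Tendsto (fun n => f^[n] x) Filter.atTop (nhds 1) := by
    intro x hx
    have horb : ∀ n, f^[n] x ≠ 1 - ε := by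
      intro n
      induction n with
      | zero => simpa using hx
      | succ n ih => rw [Function.iterate_succ_apply']; exact (step _ ih).1
    refine ⟨horb, ?_⟩
    have hYb : ∀ n : ℕ, ‖Y (f^[n + 1] x)‖ ≤ ‖θ - 1‖ ^ n := by
      intro n
      induction n with
      | zero => simpa using (step x hx).2.1
      | succ n ih =>
        rw [Function.iterate_succ_apply']
        have h1 : ‖Y (f^[n + 1] x)‖ ≤ 1 :=
          ih.trans (pow_le_one₀ (norm_nonneg _) (le_of_lt hθ))
        calc ‖Y (f (f^[n + 1] x))‖ ≤ ‖θ - 1‖ * ‖Y (f^[n + 1] x)‖ :=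
              (step _ (horb (n + 1))).2.2 h1
          _ ≤ ‖θ - 1‖ * ‖θ - 1‖ ^ n := mul_le_mul_of_nonneg_left ih (norm_nonneg _)
          _ = ‖θ - 1‖ ^ (n + 1) := by ring
    have hxb : ∀ n : ℕ, ‖f^[n + 2] x - 1‖ ≤ ‖ε‖ * ‖θ - 1‖ ^ (n + 1) := by
      intro n
      set w := f^[n + 2] x with hw
      have hwp : w ≠ 1 - ε := horb (n + 2)
      have hBw : w - 1 + ε ≠ 0 := fun h => hwp (by linear_combination h)
      have hYw : ‖Y w‖ ≤ ‖θ - 1‖ ^ (n + 1) := hYb (n + 1)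
      have hYw1 : ‖Y w‖ < 1 :=
        lt_of_le_of_lt hYw (pow_lt_one₀ (norm_nonneg _) hθ (Nat.succ_ne_zero n))
      have h1Y : ‖1 - Y w‖ = 1 := by
        rw [sub_eq_add_neg, Padic.add_eq_max_of_ne, norm_one, norm_neg,
          max_eq_left (le_of_lt hYw1)]
        rw [norm_one, norm_neg]
        exact (ne_of_lt hYw1).symm
      have hid : (w - 1) * (1 - Y w) = Y w * ε := by
        simp only [hY]
        field_simp
        ring
      have hnw : ‖w - 1‖ = ‖Y w‖ * ‖ε‖ := by
        have hcg := congrArg norm hid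
        rw [norm_mul, norm_mul, h1Y, mul_one] at hcg
        exact hcg
      rw [hnw]
      calc ‖Y w‖ * ‖ε‖ ≤ ‖θ - 1‖ ^ (n + 1) * ‖ε‖ :=
            mul_le_mul_of_nonneg_right hYw (norm_nonneg _)
        _ = ‖ε‖ * ‖θ - 1‖ ^ (n + 1) := mul_comm _ _
    rw [tendsto_iff_norm_sub_tendsto_zero]
    apply squeeze_zero' (Filter.Eventually.of_forall fun n => norm_nonneg _)
      (g := fun n => ‖ε‖ * ‖θ - 1‖ ^ (n - 1))
    · filter_upwards [Filter.eventually_ge_atTop 2] with n hn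
      have h2 : n - 2 + 2 = n := by omega
      have h3 : n - 2 + 1 = n - 1 := by omega
      have hb := hxb (n - 2)
      rw [h2, h3] at hb
      exact hb
    · have hgeo : Filter.Tendsto (fun m : ℕ => ‖θ - 1‖ ^ m) Filter.atTop (nhds 0) :=
        tendsto_pow_atTop_nhds_zero_of_lt_one (norm_nonneg _) hθ
      have hcomp := (hgeo.comp (Filter.tendsto_sub_atTop_nat 1)).const_mul ‖ε‖
      simpa using hcomp
  refine ⟨?_, ?_, ?_⟩
  · intro x hx
    rw [hpole] at hx ⊢
    exact main x hx
  · show f 1 = 1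
    rw [hf]; simp only [pottsBethe]
    have h1 : θ * 1 + (q : ℚ_[p]) - 1 = ε := by rw [hε]; ring
    have h2 : (1 : ℚ_[p]) + θ + (q : ℚ_[p]) - 2 = ε := by rw [hε]; ring
    rw [h1, h2, div_self hε0, one_pow]
  · intro x hx hfx
    rw [hpole] at hx
    have hconst : ∀ n, f^[n] x = x := fun n => Function.iterate_fixed hfx n
    have htd := (main x hx).2
    have heq : (fun n : ℕ => f^[n] x) = fun _ : ℕ => x := funext hconst
    rw [heq] at htd
    exact (tendsto_nhds_unique htd tendsto_const_nhds).symm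
end

section
/- Let p ≥ 3 be a prime, let q, k ≥ 1 be natural numbers and θ ∈ ℚ_p with |q|_p < 1, |θ − 1|_p < 1, and |k|_p ≤ |q + θ − 1|_p. Then for every x ∈ ℚ_p with x ≠ 2 − q − θ one has |f(x) − (2 − q − θ)|_p ≥ |q + θ − 1|_p; consequently the pole x^∞ = 2 − q − θ has no preimages under f, i.e. the set ⋃_{n≥1} f^{−n}({x^∞}) is empty. -/
section Helpers

variable {p : ℕ} [Fact p.Prime]

-- step lemma
lemma padic_step (D : ℤ_[p]) (hD : ‖D - 1‖ ≤ (p:ℝ)⁻¹) :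
    ‖D ^ p - 1‖ ≤ (p:ℝ)⁻¹ * ‖D - 1‖ := by
  have hgeom : (∑ i ∈ Finset.range p, D ^ i) * (D - 1) = D ^ p - 1 := geom_sum_mul D p
  have hdvd : (D - 1) ∣ (∑ i ∈ Finset.range p, D ^ i) - (p : ℤ_[p]) := by
    have : (∑ i ∈ Finset.range p, D ^ i) - (p : ℤ_[p])
        = ∑ i ∈ Finset.range p, (D ^ i - 1) := by
      rw [Finset.sum_sub_distrib]
      simp
    rw [this]
    exact Finset.dvd_sum fun i _ => by
      simpa using sub_dvd_pow_sub_pow D 1 i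
  obtain ⟨T, hT⟩ := hdvd
  have hS : ‖(∑ i ∈ Finset.range p, D ^ i)‖ ≤ (p:ℝ)⁻¹ := by
    have h1 : ‖(D - 1) * T‖ ≤ (p:ℝ)⁻¹ := by
      rw [norm_mul]
      calc ‖D - 1‖ * ‖T‖ ≤ ‖D - 1‖ * 1 :=
            mul_le_mul_of_nonneg_left (PadicInt.norm_le_one T) (norm_nonneg _)
        _ ≤ (p:ℝ)⁻¹ := by rwa [mul_one]
    have h2 : ‖(p : ℤ_[p])‖ ≤ (p:ℝ)⁻¹ := le_of_eq PadicInt.norm_p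
    have : (∑ i ∈ Finset.range p, D ^ i) = (D - 1) * T + (p : ℤ_[p]) := by
      rw [← hT]; ring
    rw [this]
    exact le_trans (PadicInt.nonarchimedean _ _) (max_le h1 h2)
  calc ‖D ^ p - 1‖ = ‖(∑ i ∈ Finset.range p, D ^ i)‖ * ‖D - 1‖ := by
        rw [← hgeom, norm_mul]
    _ ≤ (p:ℝ)⁻¹ * ‖D - 1‖ := mul_le_mul_of_nonneg_right hS (norm_nonneg _)

lemma padic_iter (D : ℤ_[p]) (hD : ‖D - 1‖ ≤ (p:ℝ)⁻¹) (e : ℕ) :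
    ‖D ^ (p ^ e) - 1‖ ≤ ((p:ℝ)⁻¹) ^ e * ‖D - 1‖ := by
  induction e with
  | zero => simp
  | succ e ih =>
    have hip : (0:ℝ) < (p:ℝ)⁻¹ := by
      have := (Fact.out : p.Prime).pos
      positivity
    have hle : ‖D ^ (p ^ e) - 1‖ ≤ (p:ℝ)⁻¹ := by
      refine le_trans ih ?_
      calc ((p:ℝ)⁻¹) ^ e * ‖D - 1‖ ≤ 1 ^ e * (p:ℝ)⁻¹ := by
            apply mul_le_mul _ hD (norm_nonneg _) (by norm_num)
            apply pow_le_pow_left₀ (le_of_lt hip)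
            have : (1:ℝ) ≤ (p:ℝ) := by exact_mod_cast (Fact.out : p.Prime).one_le
            rw [inv_le_one_iff₀]; right; exact this
        _ = (p:ℝ)⁻¹ := by rw [one_pow, one_mul]
    have := padic_step (D ^ (p ^ e)) hle
    rw [← pow_mul, ← pow_succ] at this
    refine le_trans this ?_
    rw [pow_succ]
    calc (p:ℝ)⁻¹ * ‖D ^ p ^ e - 1‖ ≤ (p:ℝ)⁻¹ * (((p:ℝ)⁻¹) ^ e * ‖D - 1‖) :=
          mul_le_mul_of_nonneg_left ih (le_of_lt hip)
      _ = ((p:ℝ)⁻¹) ^ e * (p:ℝ)⁻¹ * ‖D - 1‖ := by ring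

lemma padic_residue (C : ℤ_[p]) (e : ℕ) (h : ‖C ^ (p ^ e) - 1‖ < 1) :
    ‖C - 1‖ ≤ (p:ℝ)⁻¹ := by
  have h1 : PadicInt.toZMod (C ^ (p ^ e) - 1) = 0 := by
    rw [← RingHom.mem_ker, PadicInt.ker_toZMod, PadicInt.maximalIdeal_eq_span_p,
      Ideal.mem_span_singleton, ← PadicInt.norm_lt_one_iff_dvd]
    exact h
  have h2 : PadicInt.toZMod (C - 1) = 0 := by
    have hC : PadicInt.toZMod C ^ (p ^ e) = PadicInt.toZMod C := ZMod.pow_card_pow _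
    have := h1
    rw [map_sub, map_pow, map_one, hC, sub_eq_zero] at this
    rw [map_sub, map_one, this, sub_self]
  have h3 : ‖C - 1‖ < 1 := by
    rw [PadicInt.norm_lt_one_iff_dvd, ← Ideal.mem_span_singleton,
      ← PadicInt.maximalIdeal_eq_span_p, ← PadicInt.ker_toZMod, RingHom.mem_ker]
    exact h2
  rw [PadicInt.norm_lt_one_iff_dvd] at h3
  obtain ⟨z, hz⟩ := h3
  rw [hz, norm_mul, PadicInt.norm_p]
  calc (p:ℝ)⁻¹ * ‖z‖ ≤ (p:ℝ)⁻¹ * 1 :=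
        mul_le_mul_of_nonneg_left (PadicInt.norm_le_one z) (by positivity)
    _ = (p:ℝ)⁻¹ := mul_one _

lemma padic_key (k e : ℕ) (hk1 : 1 ≤ k) (he : 1 ≤ e) (hdvd : p ^ e ∣ k)
    (ε : ℚ_[p]) (hε : ‖ε‖ = (p:ℝ) ^ (-(e:ℤ))) (A : ℚ_[p]) :
    ‖ε‖ ≤ ‖A ^ k - 1 + ε‖ := by
  have hp1 : (1:ℝ) < (p:ℝ) := by exact_mod_cast (Fact.out : p.Prime).one_lt
  have hεlt : ‖ε‖ < 1 := by
    rw [hε, ← zpow_zero (p:ℝ)]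
    apply zpow_lt_zpow_right₀ hp1
    omega
  rcases lt_trichotomy ‖A‖ 1 with hA | hA | hA
  · -- ‖A‖ < 1
    have hAk : ‖A ^ k‖ < 1 := by
      rw [norm_pow]
      exact pow_lt_one₀ (norm_nonneg _) hA (by omega)
    have h1 : ‖A ^ k + ε‖ < 1 := by
      apply lt_of_le_of_lt (Padic.nonarchimedean _ _)
      exact max_lt hAk hεlt
    have heq : A ^ k - 1 + ε = (A ^ k + ε) + (-1) := by ring
    rw [heq, Padic.add_eq_max_of_ne (by rw [norm_neg, norm_one]; exact ne_of_lt h1)]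
    rw [norm_neg, norm_one, max_eq_right (le_of_lt h1)]
    exact le_of_lt hεlt
  · -- ‖A‖ = 1
    set a : ℤ_[p] := ⟨A, le_of_eq hA⟩ with ha
    set m := k / p ^ e with hm
    have hkm : p ^ e * m = k := Nat.mul_div_cancel' hdvd
    set C : ℤ_[p] := a ^ m with hC
    have hcoe : ((C ^ (p ^ e) - 1 : ℤ_[p]) : ℚ_[p]) = A ^ k - 1 := by
      push_cast [hC, ha]
      show (A ^ m) ^ (p ^ e) - 1 = A ^ k - 1
      rw [← pow_mul]
      rw [mul_comm m (p ^ e), hkm]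
    have hnorm : ‖C ^ (p ^ e) - 1‖ = ‖A ^ k - 1‖ := by
      rw [PadicInt.norm_def, hcoe]
    by_cases hlt : ‖C ^ (p ^ e) - 1‖ < 1
    · have hC1 := padic_residue C e hlt
      have hiter := padic_iter C hC1 e
      have hsmall : ‖A ^ k - 1‖ < ‖ε‖ := by
        rw [← hnorm]
        apply lt_of_le_of_lt hiter
        have h2 : ((p:ℝ)⁻¹) ^ e * ‖C - 1‖ ≤ ((p:ℝ)⁻¹) ^ e * (p:ℝ)⁻¹ :=
          mul_le_mul_of_nonneg_left hC1 (by positivity)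
        apply lt_of_le_of_lt h2
        have h3 : ((p:ℝ)⁻¹) ^ e * (p:ℝ)⁻¹ = (p:ℝ) ^ (-((e:ℤ) + 1)) := by
          rw [← pow_succ, ← zpow_natCast ((p:ℝ)⁻¹), inv_zpow, ← zpow_neg]
          push_cast
          ring_nf
        rw [h3, hε]
        apply zpow_lt_zpow_right₀ hp1
        omega
      rw [Padic.add_eq_max_of_ne (ne_of_lt hsmall)]
      exact le_max_right _ _
    · have hone : ‖A ^ k - 1‖ = 1 := by
        rw [← hnorm]
        exact le_antisymm (PadicInt.norm_le_one _) (not_lt.mp hlt)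
      rw [Padic.add_eq_max_of_ne (by rw [hone]; exact (ne_of_lt hεlt).symm)]
      rw [hone, max_eq_left (le_of_lt hεlt)]
      exact le_of_lt hεlt
  · -- 1 < ‖A‖
    have hAk : 1 < ‖A ^ k‖ := by
      rw [norm_pow]
      exact one_lt_pow₀ hA (by omega)
    have h1 : ‖ε - 1‖ < ‖A ^ k‖ := by
      have h2 : ‖ε - 1‖ ≤ 1 := by
        rw [sub_eq_add_neg]
        exact le_trans (Padic.nonarchimedean _ _)
          (max_le hεlt.le (by rw [norm_neg, norm_one]))
      exact lt_of_le_of_lt h2 hAk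
    have heq : A ^ k - 1 + ε = A ^ k + (ε - 1) := by ring
    rw [heq, Padic.add_eq_max_of_ne (ne_of_gt h1), max_eq_left (le_of_lt h1)]
    exact le_of_lt (lt_trans hεlt hAk)

end Helpers

theorem stmt1 (p : ℕ) [Fact p.Prime] (hp : 3 ≤ p) (q k : ℕ) (hq : 1 ≤ q) (hk : 1 ≤ k)
    (θ : ℚ_[p]) (hqnorm : ‖(q : ℚ_[p])‖ < 1) (hθ : ‖θ - 1‖ < 1)
    (hkq : ‖(k : ℚ_[p])‖ ≤ ‖(q : ℚ_[p]) + θ - 1‖) :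
    (∀ x : ℚ_[p], x ≠ 2 - (q : ℚ_[p]) - θ →
      ‖pottsBethe p q k θ x - (2 - (q : ℚ_[p]) - θ)‖ ≥ ‖(q : ℚ_[p]) + θ - 1‖) ∧
    (∀ x : ℚ_[p], x ≠ 2 - (q : ℚ_[p]) - θ →
      ∀ n : ℕ, 1 ≤ n → (pottsBethe p q k θ)^[n] x ≠ 2 - (q : ℚ_[p]) - θ) := by
  have hp1 : (1:ℝ) < (p:ℝ) := by exact_mod_cast (Fact.out : p.Prime).one_lt
  set ε := (q:ℚ_[p]) + θ - 1 with hεdef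
  have hεnorm : ‖ε‖ < 1 := by
    have h : ε = (q:ℚ_[p]) + (θ - 1) := by rw [hεdef]; ring
    rw [h]
    exact lt_of_le_of_lt (Padic.nonarchimedean _ _) (max_lt hqnorm hθ)
  have hk0 : (k:ℚ_[p]) ≠ 0 := Nat.cast_ne_zero.2 (by omega)
  have hε0 : ε ≠ 0 := by
    intro h; rw [h, norm_zero] at hkq; exact hk0 (norm_le_zero_iff.mp hkq)
  have hval := Padic.norm_eq_zpow_neg_valuation hε0
  have hv1 : 1 ≤ ε.valuation := by
    by_contra h
    push_neg at h
    have h2 : (1:ℝ) ≤ ‖ε‖ := by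
      rw [hval, ← zpow_zero (p:ℝ)]
      apply zpow_le_zpow_right₀ hp1.le
      omega
    linarith
  set e := ε.valuation.toNat with hee
  have hecast : (e:ℤ) = ε.valuation := Int.toNat_of_nonneg (by omega)
  have he1 : 1 ≤ e := by omega
  have hεe : ‖ε‖ = (p:ℝ) ^ (-(e:ℤ)) := by rw [hval, hecast]
  have hdvd : p ^ e ∣ k := by
    have h1 : ‖((k:ℤ) : ℚ_[p])‖ ≤ (p:ℝ) ^ (-(e:ℤ)) := by
      push_cast
      rw [← hεe]; exact hkq
    have h2 := (Padic.norm_int_le_pow_iff_dvd (k:ℤ) e).mp h1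
    exact_mod_cast h2
  have key : ∀ x : ℚ_[p], ‖ε‖ ≤ ‖pottsBethe p q k θ x - (2 - (q:ℚ_[p]) - θ)‖ := by
    intro x
    have heq : pottsBethe p q k θ x - (2 - (q:ℚ_[p]) - θ)
        = ((θ * x + (q : ℚ_[p]) - 1) / (x + θ + (q : ℚ_[p]) - 2)) ^ k - 1 + ε := by
      simp only [pottsBethe, hεdef]; ring
    rw [heq]
    exact padic_key k e hk he1 hdvd ε hεe _
  constructor
  · intro x _
    exact key x
  · intro x _ n hn hcontra
    obtain ⟨m, rfl⟩ : ∃ m, n = m + 1 := ⟨n - 1, by omega⟩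
    rw [Function.iterate_succ_apply'] at hcontra
    have h3 := key ((pottsBethe p q k θ)^[m] x)
    rw [hcontra, sub_self, norm_zero] at h3
    exact hε0 (norm_le_zero_iff.mp h3)
end

section
/- Let p ≥ 3 be a prime and k ≥ 2 a natural number. Then for any α, β ∈ 𝓔_p one has |∑_{j=0}^{k−1} α^{k−1−j}·β^j − k|_p < |k|_p; equivalently, there exists γ ∈ 𝓔_p with ∑_{j=0}^{k−1} α^{k−1−j}·β^j = k·γ. -/
open Finset

-- hockey stick identity
lemma hockey {R : Type*} [CommRing R] (x : R) (k : ℕ) :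
    ∑ m ∈ range k, (1 + x) ^ m = ∑ i ∈ range k, (k.choose (i + 1) : R) * x ^ i := by
  induction k with
  | zero => simp
  | succ k ih =>
    rw [sum_range_succ, ih]
    have hpow : (1 + x) ^ k = ∑ i ∈ range (k + 1), (k.choose i : R) * x ^ i := by
      rw [add_comm 1 x, add_pow]
      simp [mul_comm]
    have : ∑ i ∈ range (k + 1), ((k+1).choose (i + 1) : R) * x ^ i
        = ∑ i ∈ range (k + 1), ((k.choose i : R) * x ^ i + (k.choose (i+1) : R) * x ^ i) := by
      refine sum_congr rfl fun i _ => ?_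
      rw [Nat.choose_succ_succ]
      push_cast
      ring
    rw [this, sum_add_distrib, ← hpow, sum_range_succ (fun i => (k.choose (i+1) : R) * x ^ i)]
    rw [Nat.choose_succ_self]
    push_cast
    ring

lemma three_pow (i : ℕ) : i + 2 < 3 ^ (i + 1) := by
  induction i with
  | zero => norm_num
  | succ i ih => rw [pow_succ]; omega

lemma val_le (p : ℕ) [hF : Fact p.Prime] (hp : 3 ≤ p) (i : ℕ) :
    padicValNat p (i + 2) ≤ i := by
  by_contra h
  rw [not_le] at h
  have h1 : p ^ (i + 1) ≤ p ^ padicValNat p (i + 2) :=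
    Nat.pow_le_pow_right hF.out.pos (by omega)
  have h2 : p ^ padicValNat p (i + 2) ≤ i + 2 :=
    Nat.le_of_dvd (by omega) (pow_padicValNat_dvd)
  have h3 : 3 ^ (i + 1) ≤ p ^ (i + 1) := Nat.pow_le_pow_left hp _
  have := three_pow i
  omega

-- norm of (i+2) as nat cast
lemma norm_nat_eq (p : ℕ) [hF : Fact p.Prime] (i : ℕ) :
    ‖((i + 2 : ℕ) : ℚ_[p])‖ = (p : ℝ) ^ (-(padicValNat p (i + 2) : ℤ)) := by
  rw [Padic.norm_eq_zpow_neg_valuation (Nat.cast_ne_zero.mpr (by omega)),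
    Padic.valuation_natCast]

lemma choose_bound (p : ℕ) [hF : Fact p.Prime] (hp : 3 ≤ p) (k : ℕ) (hk : 1 ≤ k) (i : ℕ) :
    ‖(k.choose (i + 2) : ℚ_[p])‖ ≤ ‖(k : ℚ_[p])‖ * (p : ℝ) ^ ((padicValNat p (i + 2) : ℤ)) := by
  have hid : (k : ℚ_[p]) * ((k - 1).choose (i + 1) : ℚ_[p])
      = (k.choose (i + 2) : ℚ_[p]) * ((i + 2 : ℕ) : ℚ_[p]) := by
    have := Nat.add_one_mul_choose_eq (k - 1) (i + 1)
    have hk1 : k - 1 + 1 = k := by omega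
    rw [hk1] at this
    exact_mod_cast congrArg (Nat.cast : ℕ → ℚ_[p]) this
  have h1 : ‖(k : ℚ_[p]) * ((k - 1).choose (i + 1) : ℚ_[p])‖ ≤ ‖(k : ℚ_[p])‖ := by
    rw [norm_mul]
    have : ‖(((k - 1).choose (i + 1) : ℤ) : ℚ_[p])‖ ≤ 1 := Padic.norm_int_le_one _
    have h2 : ‖(((k - 1).choose (i + 1) : ℕ) : ℚ_[p])‖ ≤ 1 := by exact_mod_cast this
    nlinarith [norm_nonneg ((k : ℚ_[p]))]
  rw [hid, norm_mul, norm_nat_eq] at h1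
  have hppos : (0:ℝ) < (p:ℝ) ^ ((padicValNat p (i + 2) : ℤ)) :=
    zpow_pos (by exact_mod_cast hF.out.pos) _
  calc ‖(k.choose (i + 2) : ℚ_[p])‖
      = ‖(k.choose (i + 2) : ℚ_[p])‖ * (p : ℝ) ^ (-(padicValNat p (i + 2) : ℤ))
        * (p : ℝ) ^ ((padicValNat p (i + 2) : ℤ)) := by
        rw [mul_assoc, ← zpow_add₀ (by exact_mod_cast hF.out.pos.ne' : (p:ℝ) ≠ 0)]
        simp
    _ ≤ ‖(k : ℚ_[p])‖ * (p : ℝ) ^ ((padicValNat p (i + 2) : ℤ)) := by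
        apply mul_le_mul_of_nonneg_right h1 hppos.le

lemma key (p : ℕ) [hF : Fact p.Prime] (hp : 3 ≤ p) (k : ℕ) (hk : 1 ≤ k)
    (u : ℚ_[p]) (hu : ‖u - 1‖ < 1) :
    ‖(∑ m ∈ Finset.range k, u ^ m) - (k : ℚ_[p])‖ ≤ ‖(k : ℚ_[p])‖ * (p : ℝ)⁻¹ := by
  set x := u - 1 with hxdef
  have hpR : (1:ℝ) < p := by exact_mod_cast hF.out.one_lt
  have hx : ‖x‖ ≤ (p : ℝ) ^ (-1 : ℤ) := by
    rw [Padic.norm_le_pow_iff_norm_lt_pow_add_one]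
    simpa using hu
  have hu' : u = 1 + x := by ring
  rw [hu', hockey]
  obtain ⟨n, rfl⟩ : ∃ n, k = n + 1 := ⟨k - 1, by omega⟩
  rw [Finset.sum_range_succ']
  have hf0 : ((n+1).choose (0 + 1) : ℚ_[p]) * x ^ 0 = ((n+1 : ℕ) : ℚ_[p]) := by
    simp
  rw [hf0, add_sub_cancel_right]
  apply IsUltrametricDist.norm_sum_le_of_forall_le_of_nonneg
  · positivity
  intro i _
  rw [norm_mul, norm_pow]
  have hc := choose_bound p hp (n+1) (by omega) i
  have hv := val_le p hp i
  set v : ℕ := padicValNat p (i + 2)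
  have hxp : ‖x‖ ^ (i+1) ≤ ((p:ℝ) ^ (-1 : ℤ)) ^ (i+1) :=
    pow_le_pow_left₀ (norm_nonneg _) hx _
  have hmul : ‖((n+1).choose (i + 2) : ℚ_[p])‖ * ‖x‖ ^ (i+1)
      ≤ (‖((n+1 : ℕ) : ℚ_[p])‖ * (p:ℝ) ^ (v:ℤ)) * ((p:ℝ) ^ (-1 : ℤ)) ^ (i+1) := by
    apply mul_le_mul hc hxp (by positivity) (by positivity)
  refine hmul.trans ?_
  rw [mul_assoc]
  apply mul_le_mul_of_nonneg_left _ (norm_nonneg _)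
  rw [← zpow_natCast ((p:ℝ) ^ (-1 : ℤ)), ← zpow_mul, ← zpow_add₀ (by positivity : (p:ℝ) ≠ 0)]
  calc (p:ℝ) ^ ((v:ℤ) + (-1) * (i+1)) ≤ (p:ℝ) ^ (-1 : ℤ) := by
        apply zpow_le_zpow_right₀ hpR.le
        have : (v:ℤ) ≤ i := by exact_mod_cast hv
        omega
    _ = (p:ℝ)⁻¹ := by simp

lemma norm_pow_sub_one_le (p : ℕ) [hF : Fact p.Prime] (β : ℚ_[p]) (hβ : ‖β - 1‖ < 1)
    (m : ℕ) : ‖β ^ m - 1‖ < 1 := by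
  have hβn : ‖β‖ = 1 := by
    have h := Padic.add_eq_max_of_ne (q := β - 1) (r := 1) (by simp [hβ.ne])
    simpa [hβ.le, max_eq_right] using h
  have hge : ‖∑ i ∈ Finset.range m, β ^ i‖ ≤ 1 := by
    apply IsUltrametricDist.norm_sum_le_of_forall_le_of_nonneg zero_le_one
    intro i _
    rw [norm_pow, hβn, one_pow]
  calc ‖β ^ m - 1‖ = ‖(∑ i ∈ Finset.range m, β ^ i) * (β - 1)‖ := by rw [geom_sum_mul]
    _ = ‖∑ i ∈ Finset.range m, β ^ i‖ * ‖β - 1‖ := norm_mul _ _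
    _ ≤ 1 * ‖β - 1‖ := by apply mul_le_mul_of_nonneg_right hge (norm_nonneg _)
    _ < 1 := by rwa [one_mul]

theorem stmt2 (p : ℕ) [Fact p.Prime] (hp : 3 ≤ p) (k : ℕ) (hk : 2 ≤ k)
    (α β : ℚ_[p]) (hα : ‖α - 1‖ < 1) (hβ : ‖β - 1‖ < 1) :
    ‖(∑ j ∈ Finset.range k, α ^ (k - 1 - j) * β ^ j) - (k : ℚ_[p])‖ < ‖(k : ℚ_[p])‖ ∧
    ∃ γ : ℚ_[p], ‖γ - 1‖ < 1 ∧
      (∑ j ∈ Finset.range k, α ^ (k - 1 - j) * β ^ j) = (k : ℚ_[p]) * γ := by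
  have hF : Fact p.Prime := inferInstance
  have hpR : (1:ℝ) < p := by exact_mod_cast hF.out.one_lt
  have hβn : ‖β‖ = 1 := by
    have h := Padic.add_eq_max_of_ne (q := β - 1) (r := 1) (by simp [hβ.ne])
    simpa [hβ.le, max_eq_right] using h
  have hβ0 : β ≠ 0 := by intro h; rw [h] at hβn; simp at hβn
  set u : ℚ_[p] := α / β with hudef
  have hαu : α = β * u := by rw [hudef]; field_simp
  have hu1 : ‖u - 1‖ < 1 := by
    have : u - 1 = (α - β) / β := by rw [hudef, div_sub_one hβ0]
    rw [this, norm_div, hβn, div_one]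
    have : α - β = (α - 1) + (-(β - 1)) := by ring
    rw [this]
    calc ‖(α - 1) + (-(β - 1))‖ ≤ max ‖α - 1‖ ‖-(β - 1)‖ := Padic.nonarchimedean _ _
      _ < 1 := by rw [norm_neg]; exact max_lt hα hβ
  set S : ℚ_[p] := ∑ j ∈ Finset.range k, α ^ (k - 1 - j) * β ^ j with hSdef
  have hS : S = β ^ (k - 1) * ∑ m ∈ Finset.range k, u ^ m := by
    rw [hSdef, Finset.mul_sum, ← Finset.sum_range_reflect (fun m => β ^ (k-1) * u ^ m) k]
    refine Finset.sum_congr rfl fun j hj => ?_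
    rw [Finset.mem_range] at hj
    rw [hαu, mul_pow, mul_comm (β ^ (k - 1 - j) * u ^ (k - 1 - j)) (β ^ j),
      ← mul_assoc, ← pow_add]
    congr 2
    omega
  have hkR : (0:ℝ) < ‖(k : ℚ_[p])‖ := by
    rw [norm_pos_iff]
    exact_mod_cast Nat.cast_ne_zero.mpr (by omega : k ≠ 0)
  have hβpow : ‖β ^ (k-1) - 1‖ ≤ (p:ℝ)⁻¹ := by
    have h1 := norm_pow_sub_one_le p β hβ (k-1)
    have := (Padic.norm_le_pow_iff_norm_lt_pow_add_one (β ^ (k-1) - 1) (-1)).mpr (by simpa using h1)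
    simpa using this
  have hmain : ‖S - (k : ℚ_[p])‖ ≤ ‖(k : ℚ_[p])‖ * (p:ℝ)⁻¹ := by
    have hdecomp : S - (k : ℚ_[p]) =
        β ^ (k-1) * ((∑ m ∈ Finset.range k, u ^ m) - (k : ℚ_[p]))
        + (k : ℚ_[p]) * (β ^ (k-1) - 1) := by
      rw [hS]; ring
    rw [hdecomp]
    have h1 : ‖β ^ (k-1) * ((∑ m ∈ Finset.range k, u ^ m) - (k : ℚ_[p]))‖
        ≤ ‖(k : ℚ_[p])‖ * (p:ℝ)⁻¹ := by
      rw [norm_mul, norm_pow, hβn, one_pow, one_mul]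
      exact key p hp k (by omega) u hu1
    have h2 : ‖(k : ℚ_[p]) * (β ^ (k-1) - 1)‖ ≤ ‖(k : ℚ_[p])‖ * (p:ℝ)⁻¹ := by
      rw [norm_mul]
      exact mul_le_mul_of_nonneg_left hβpow (norm_nonneg _)
    calc ‖_ + _‖ ≤ max _ _ := Padic.nonarchimedean _ _
      _ ≤ ‖(k : ℚ_[p])‖ * (p:ℝ)⁻¹ := max_le h1 h2
  have hlt : ‖S - (k : ℚ_[p])‖ < ‖(k : ℚ_[p])‖ := by
    refine hmain.trans_lt ?_
    calc ‖(k : ℚ_[p])‖ * (p:ℝ)⁻¹ < ‖(k : ℚ_[p])‖ * 1 := by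
          apply mul_lt_mul_of_pos_left _ hkR
          rw [inv_lt_one_iff₀]; right; exact hpR
      _ = ‖(k : ℚ_[p])‖ := mul_one _
  refine ⟨hlt, (k : ℚ_[p])⁻¹ * S, ?_, ?_⟩
  · have hk0 : (k : ℚ_[p]) ≠ 0 := by exact_mod_cast Nat.cast_ne_zero.mpr (by omega : k ≠ 0)
    have : (k : ℚ_[p])⁻¹ * S - 1 = (k : ℚ_[p])⁻¹ * (S - (k : ℚ_[p])) := by
      field_simp
    rw [this, norm_mul, norm_inv]
    rw [inv_mul_lt_one₀ hkR] at *
    · simpa using hlt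
  · have hk0 : (k : ℚ_[p]) ≠ 0 := by exact_mod_cast Nat.cast_ne_zero.mpr (by omega : k ≠ 0)
    field_simp
end

section
/- Let p ≥ 3 be a prime and k ≥ 1 a natural number. If a ∈ 𝓔_p satisfies |a − 1|_p ≥ |k|_p, then |x^k − a|_p ≥ |a − 1|_p for every x ∈ ℚ_p. -/
open IsUltrametricDist Finset

/-- If `‖u - 1‖ ≤ p⁻¹` then `‖u^p - 1‖ ≤ p⁻¹ * ‖u - 1‖` (for `p ≥ 3`). -/
lemma aux_step_p (p : ℕ) [hpf : Fact p.Prime] (hp : 3 ≤ p) (u : ℚ_[p])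
    (h : ‖u - 1‖ ≤ (p : ℝ)⁻¹) : ‖u ^ p - 1‖ ≤ (p : ℝ)⁻¹ * ‖u - 1‖ := by
  set t : ℚ_[p] := u - 1 with ht
  have hu : u = t + 1 := by rw [ht]; ring
  have hexp : u ^ p - 1 = ∑ j ∈ range p, t ^ (j + 1) * (p.choose (j + 1) : ℚ_[p]) := by
    rw [hu, add_pow]
    rw [Finset.sum_range_succ' (fun j => t ^ j * 1 ^ (p - j) * (p.choose j : ℚ_[p])) p]
    simp [one_pow]
  rw [hexp]
  have hppos : (0 : ℝ) < p := by positivity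
  refine norm_sum_le_of_forall_le_of_nonneg (by positivity) fun j hj => ?_
  have hjlt : j < p := Finset.mem_range.mp hj
  have htle : ‖t‖ ≤ 1 := h.trans (by
    rw [inv_le_one_iff₀]; right; exact_mod_cast hpf.out.one_lt.le)
  rw [norm_mul, pow_succ']
  rw [norm_mul]
  have key : ‖t ^ j‖ * ‖(p.choose (j + 1) : ℚ_[p])‖ ≤ (p : ℝ)⁻¹ := by
    rcases eq_or_lt_of_le (Nat.succ_le_of_lt hjlt) with hj1 | hj1
    · -- j + 1 = p, choose = 1, bound t^j
      have hch1 : p.choose (j + 1) = 1 := by rw [show j + 1 = p from hj1]; exact Nat.choose_self p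
      rw [hch1]
      simp only [Nat.cast_one, norm_one, mul_one]
      have hj1' : 1 ≤ j := by omega
      calc ‖t ^ j‖ = ‖t‖ ^ j := norm_pow t j
        _ ≤ ((p : ℝ)⁻¹) ^ j := pow_le_pow_left₀ (norm_nonneg t) h j
        _ ≤ ((p : ℝ)⁻¹) ^ 1 := pow_le_pow_of_le_one (by positivity)
            (by rw [inv_le_one_iff₀]; right; exact_mod_cast hpf.out.one_lt.le) hj1'
        _ = (p : ℝ)⁻¹ := pow_one _
    · -- j + 1 < p, so p ∣ choose p (j+1)
      have hdvd : p ∣ p.choose (j + 1) := hpf.out.dvd_choose_self (Nat.succ_ne_zero j) hj1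
      have hch : ‖(p.choose (j + 1) : ℚ_[p])‖ ≤ (p : ℝ)⁻¹ := by
        have : ‖((p.choose (j + 1) : ℤ) : ℚ_[p])‖ < 1 :=
          Padic.norm_intCast_lt_one_iff.mpr (by exact_mod_cast hdvd)
        have h2 := (Padic.norm_le_pow_iff_norm_lt_pow_add_one
          ((p.choose (j + 1) : ℤ) : ℚ_[p]) (-1)).mpr (by simpa using this)
        simpa [zpow_neg_one] using h2
      calc ‖t ^ j‖ * ‖(p.choose (j + 1) : ℚ_[p])‖
          ≤ 1 * (p : ℝ)⁻¹ := by
            apply mul_le_mul _ hch (norm_nonneg _) zero_le_one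
            rw [norm_pow]; exact pow_le_one₀ (norm_nonneg t) htle
        _ = (p : ℝ)⁻¹ := one_mul _
  rw [mul_assoc]
  calc ‖t‖ * (‖t ^ j‖ * ‖(p.choose (j + 1) : ℚ_[p])‖)
      ≤ ‖t‖ * (p : ℝ)⁻¹ := mul_le_mul_of_nonneg_left key (norm_nonneg t)
    _ = (p : ℝ)⁻¹ * ‖t‖ := mul_comm _ _

/-- If `‖u - 1‖ ≤ p⁻¹` then `‖u^n - 1‖ ≤ ‖n‖ * ‖u - 1‖` (for `p ≥ 3`). -/
lemma aux_pow_n (p : ℕ) [hpf : Fact p.Prime] (hp : 3 ≤ p) :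
    ∀ n : ℕ, ∀ u : ℚ_[p], ‖u - 1‖ ≤ (p : ℝ)⁻¹ →
      ‖u ^ n - 1‖ ≤ ‖(n : ℚ_[p])‖ * ‖u - 1‖ := by
  intro n
  induction n using Nat.strong_induction_on with
  | _ n ih =>
    intro u h
    rcases Nat.eq_zero_or_pos n with rfl | hn
    · simp
    have hppos : (0 : ℝ) < p := by positivity
    have htle : ‖u - 1‖ ≤ 1 := h.trans (by
      rw [inv_le_one_iff₀]; right; exact_mod_cast hpf.out.one_lt.le)
    by_cases hdvd : p ∣ n
    · obtain ⟨m, rfl⟩ := hdvd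
      have hm : 0 < m := by
        rcases Nat.eq_zero_or_pos m with rfl | h
        · simp at hn
        · exact h
      have hmlt : m < p * m := by
        have : 2 * m ≤ p * m := Nat.mul_le_mul_right m (by omega)
        omega
      have hstep := aux_step_p p hp u h
      have hsmall : ‖u ^ p - 1‖ ≤ (p : ℝ)⁻¹ := by
        calc ‖u ^ p - 1‖ ≤ (p : ℝ)⁻¹ * ‖u - 1‖ := hstep
          _ ≤ (p : ℝ)⁻¹ * 1 := by
              exact mul_le_mul_of_nonneg_left htle (by positivity)
          _ = (p : ℝ)⁻¹ := mul_one _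
      have := ih m hmlt (u ^ p) hsmall
      calc ‖u ^ (p * m) - 1‖ = ‖(u ^ p) ^ m - 1‖ := by rw [← pow_mul]
        _ ≤ ‖(m : ℚ_[p])‖ * ‖u ^ p - 1‖ := this
        _ ≤ ‖(m : ℚ_[p])‖ * ((p : ℝ)⁻¹ * ‖u - 1‖) := by
            exact mul_le_mul_of_nonneg_left hstep (norm_nonneg _)
        _ = ‖((p * m : ℕ) : ℚ_[p])‖ * ‖u - 1‖ := by
            have hnp : ‖(p : ℚ_[p])‖ = (p : ℝ)⁻¹ := by
              simpa using padicNormE.norm_p (p := p)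
            rw [Nat.cast_mul, norm_mul, hnp]; ring
    · -- p does not divide n : geometric sum
      have hn1 : ‖(n : ℚ_[p])‖ = 1 := by
        have : ¬ ‖((n : ℤ) : ℚ_[p])‖ < 1 := by
          rw [Padic.norm_intCast_lt_one_iff]
          exact_mod_cast hdvd
        have hle : ‖((n : ℤ) : ℚ_[p])‖ ≤ 1 := Padic.norm_int_le_one _
        push_neg at this
        have := le_antisymm hle this
        simpa using this
      rw [hn1, one_mul]
      have hgeom : u ^ n - 1 = (∑ i ∈ range n, u ^ i) * (u - 1) := (geom_sum_mul u n).symm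
      rw [hgeom, norm_mul]
      have hsum : ‖∑ i ∈ range n, u ^ i‖ ≤ 1 := by
        refine norm_sum_le_of_forall_le_of_nonneg zero_le_one fun i _ => ?_
        rw [norm_pow]
        apply pow_le_one₀ (norm_nonneg u)
        have : u = (u - 1) + 1 := by ring
        rw [this]
        calc ‖(u - 1) + 1‖ ≤ max ‖u - 1‖ ‖(1 : ℚ_[p])‖ := Padic.nonarchimedean _ _
          _ ≤ 1 := by rw [norm_one]; exact max_le htle le_rfl
      calc ‖∑ i ∈ range n, u ^ i‖ * ‖u - 1‖ ≤ 1 * ‖u - 1‖ :=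
            mul_le_mul_of_nonneg_right hsum (norm_nonneg _)
        _ = ‖u - 1‖ := one_mul _

/-- If `‖x^k - 1‖ < 1` with `k ≥ 1`, then `‖x^k - 1‖ ≤ ‖k‖ / p`. -/
lemma aux_main (p : ℕ) [hpf : Fact p.Prime] (hp : 3 ≤ p) (k : ℕ) (hk : 1 ≤ k)
    (x : ℚ_[p]) (hx : ‖x ^ k - 1‖ < 1) :
    ‖x ^ k - 1‖ ≤ ‖(k : ℚ_[p])‖ * (p : ℝ)⁻¹ := by
  have hppos : (0 : ℝ) < p := by positivity
  -- ‖x‖ ≤ 1 and in fact ‖x‖ = 1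
  have hxk1 : ‖x ^ k‖ = 1 := by
    have : x ^ k = (x ^ k - 1) + 1 := by ring
    rw [this, Padic.add_eq_max_of_ne (by rw [norm_one]; exact ne_of_lt hx)]
    rw [norm_one]
    exact max_eq_right hx.le
  have hx1 : ‖x‖ ≤ 1 := by
    rcases le_or_gt ‖x‖ 1 with h | h
    · exact h
    · exfalso
      have := one_lt_pow₀ h (by omega : k ≠ 0)
      rw [← norm_pow, hxk1] at this
      exact lt_irrefl 1 this
  set X : ℤ_[p] := ⟨x, hx1⟩ with hX
  have hcoe : (X : ℚ_[p]) = x := rfl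
  have hXk_lt : ‖X ^ k - 1‖ < 1 := by
    have hcoe1 : ((X ^ k - 1 : ℤ_[p]) : ℚ_[p]) = x ^ k - 1 := by push_cast [hcoe]; ring
    rw [← PadicInt.padic_norm_e_of_padicInt, hcoe1]
    exact hx
  have hXk : PadicInt.toZMod (X ^ k) = 1 := by
    have hker : X ^ k - 1 ∈ RingHom.ker (PadicInt.toZMod (p := p)) := by
      rw [PadicInt.ker_toZMod, PadicInt.maximalIdeal_eq_span_p, Ideal.mem_span_singleton]
      exact (PadicInt.norm_lt_one_iff_dvd _).mp hXk_lt
    have := RingHom.mem_ker.mp hker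
    rw [map_sub, map_one, sub_eq_zero] at this
    exact this
  set y : ZMod p := PadicInt.toZMod X with hy
  have hyk : y ^ k = 1 := by rw [hy, ← map_pow]; exact hXk
  have hy0 : y ≠ 0 := by
    intro h0
    rw [h0, zero_pow (by omega : k ≠ 0)] at hyk
    exact zero_ne_one hyk
  have hfin : IsOfFinOrder y := isOfFinOrder_iff_pow_eq_one.mpr ⟨k, by omega, hyk⟩
  set d : ℕ := orderOf y with hd
  have hd1 : 0 < d := hfin.orderOf_pos
  have hdk : d ∣ k := orderOf_dvd_of_pow_eq_one hyk
  have hdp : d ∣ p - 1 := orderOf_dvd_of_pow_eq_one (ZMod.pow_card_sub_one_eq_one hy0)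
  have hpd : ¬ p ∣ d := by
    intro hpdvd
    have h1 : p ≤ d := Nat.le_of_dvd hd1 hpdvd
    have h2 : d ≤ p - 1 := Nat.le_of_dvd (by omega) hdp
    omega
  obtain ⟨m, rfl⟩ := hdk
  have hm1 : 1 ≤ m := by
    rcases Nat.eq_zero_or_pos m with rfl | h
    · omega
    · exact h
  -- ‖x^d - 1‖ ≤ 1/p
  have hXd : PadicInt.toZMod (X ^ d) = 1 := by
    rw [map_pow, ← hy]
    exact pow_orderOf_eq_one y
  have hXd_lt : ‖X ^ d - 1‖ < 1 := by
    rw [PadicInt.norm_lt_one_iff_dvd, ← Ideal.mem_span_singleton,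
      ← PadicInt.maximalIdeal_eq_span_p, ← PadicInt.ker_toZMod, RingHom.mem_ker,
      map_sub, map_one, sub_eq_zero]
    exact hXd
  have hud : ‖x ^ d - 1‖ ≤ (p : ℝ)⁻¹ := by
    have hcoe2 : ((X ^ d - 1 : ℤ_[p]) : ℚ_[p]) = x ^ d - 1 := by push_cast [hcoe]; ring
    have hlt1 : ‖x ^ d - 1‖ < 1 := by
      rw [← hcoe2, PadicInt.padic_norm_e_of_padicInt]
      exact hXd_lt
    have := (Padic.norm_le_pow_iff_norm_lt_pow_add_one (x ^ d - 1) (-1)).mpr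
      (by simpa using hlt1)
    simpa [zpow_neg_one] using this
  have hdnorm : ‖(d : ℚ_[p])‖ = 1 := by
    have h1 : ¬ ‖((d : ℤ) : ℚ_[p])‖ < 1 := by
      rw [Padic.norm_intCast_lt_one_iff]
      exact_mod_cast hpd
    have h2 : ‖((d : ℤ) : ℚ_[p])‖ ≤ 1 := Padic.norm_int_le_one _
    push_neg at h1
    have := le_antisymm h2 h1
    simpa using this
  have hL := aux_pow_n p hp m (x ^ d) hud
  calc ‖x ^ (d * m) - 1‖ = ‖(x ^ d) ^ m - 1‖ := by rw [← pow_mul]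
    _ ≤ ‖(m : ℚ_[p])‖ * ‖x ^ d - 1‖ := hL
    _ ≤ ‖(m : ℚ_[p])‖ * (p : ℝ)⁻¹ := mul_le_mul_of_nonneg_left hud (norm_nonneg _)
    _ = ‖((d * m : ℕ) : ℚ_[p])‖ * (p : ℝ)⁻¹ := by
        rw [Nat.cast_mul, norm_mul, hdnorm, one_mul]

theorem stmt4 (p : ℕ) [Fact p.Prime] (hp : 3 ≤ p) (k : ℕ) (hk : 1 ≤ k)
    (a : ℚ_[p]) (ha : ‖a - 1‖ < 1) (hak : ‖a - 1‖ ≥ ‖(k : ℚ_[p])‖) :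
    ∀ x : ℚ_[p], ‖x ^ k - a‖ ≥ ‖a - 1‖ := by
  intro x
  have hppos : (0 : ℝ) < p := by positivity
  have hknorm_pos : 0 < ‖(k : ℚ_[p])‖ := by
    rw [norm_pos_iff]
    exact Nat.cast_ne_zero.mpr (by omega)
  have key : x ^ k - a = (x ^ k - 1) - (a - 1) := by ring
  rcases lt_or_ge ‖x ^ k - 1‖ 1 with hlt | hge
  · -- small case
    have hmain := aux_main p hp k hk x hlt
    have hstrict : ‖x ^ k - 1‖ < ‖a - 1‖ := by
      have h1 : ‖(k : ℚ_[p])‖ * (p : ℝ)⁻¹ < ‖(k : ℚ_[p])‖ := by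
        have hinv : (p : ℝ)⁻¹ < 1 := by
          rw [inv_lt_one_iff₀]; right; exact_mod_cast by omega
        nlinarith
      exact lt_of_lt_of_le (lt_of_le_of_lt hmain h1) hak
    rw [key, sub_eq_add_neg, Padic.add_eq_max_of_ne (by
      rw [norm_neg]; exact ne_of_lt hstrict)]
    rw [norm_neg]
    exact le_max_right _ _
  · -- big case
    have hstrict : ‖a - 1‖ < ‖x ^ k - 1‖ := lt_of_lt_of_le ha hge
    rw [key, sub_eq_add_neg, Padic.add_eq_max_of_ne (by
      rw [norm_neg]; exact (ne_of_lt hstrict).symm)]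
    rw [norm_neg]
    calc ‖a - 1‖ ≤ ‖x ^ k - 1‖ := hstrict.le
      _ ≤ max ‖x ^ k - 1‖ ‖a - 1‖ := le_max_left _ _
end

section
/- Let p ≥ 3 be a prime, let q, k ≥ 1 be natural numbers and θ ∈ ℚ_p with |θ − 1|_p < |q|_p < |k|_p. If x ∈ ℚ_p satisfies |x − (2 − q − θ)|_p > |θ − 1|_p, then all iterates satisfy f^n(x) ≠ 2 − q − θ and f^n(x) → 1 as n → ∞. -/
private lemma pow_sub_one_norm_le {p : ℕ} [Fact p.Prime] (g : ℚ_[p]) (hg : ‖g‖ ≤ 1) :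
    ∀ k : ℕ, ‖g ^ k - 1‖ ≤ ‖g - 1‖ := by
  intro k
  induction k with
  | zero => simpa using norm_nonneg (g - 1)
  | succ n ih =>
      have hrw : g ^ (n + 1) - 1 = g ^ n * (g - 1) + (g ^ n - 1) := by ring
      rw [hrw]
      refine le_trans (Padic.nonarchimedean _ _) (max_le ?_ ih)
      rw [norm_mul]
      calc ‖g ^ n‖ * ‖g - 1‖ ≤ 1 * ‖g - 1‖ := by
            apply mul_le_mul_of_nonneg_right _ (norm_nonneg _)
            calc ‖g ^ n‖ = ‖g‖ ^ n := norm_pow g n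
            _ ≤ 1 := pow_le_one₀ (norm_nonneg g) hg
        _ = ‖g - 1‖ := one_mul _

private lemma step5 (p : ℕ) [Fact p.Prime] (q k : ℕ) (θ : ℚ_[p])
    (hθq : ‖θ - 1‖ < ‖(q : ℚ_[p])‖) (hQ1 : ‖(q : ℚ_[p])‖ < 1)
    (x : ℚ_[p]) (hx : ‖x - (2 - (q : ℚ_[p]) - θ)‖ > ‖θ - 1‖) :
    ‖pottsBethe p q k θ x - 1‖ * ‖x - (2 - (q : ℚ_[p]) - θ)‖ ≤ ‖θ - 1‖ * ‖x - 1‖ ∧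
    ‖pottsBethe p q k θ x - 1‖ < ‖(q : ℚ_[p])‖ ∧
    ‖pottsBethe p q k θ x - (2 - (q : ℚ_[p]) - θ)‖ = ‖(q : ℚ_[p])‖ := by
  set Q : ℚ_[p] := (q : ℚ_[p]) with hQdef
  set d : ℚ_[p] := x - (2 - Q - θ) with hddef
  have hd0 : 0 < ‖d‖ := lt_of_le_of_lt (norm_nonneg _) hx
  have hdne : d ≠ 0 := by simpa [norm_pos_iff] using hd0
  have hQ0 : 0 < ‖Q‖ := lt_of_le_of_lt (norm_nonneg _) hθq
  set g : ℚ_[p] := (θ * x + Q - 1) / d with hgdef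
  -- key identity (g - 1) * d = (θ - 1) * (x - 1)
  have hid : (g - 1) * d = (θ - 1) * (x - 1) := by
    rw [hgdef, sub_mul, div_mul_cancel₀ _ hdne, hddef]
    ring
  have hg1d : ‖g - 1‖ * ‖d‖ = ‖θ - 1‖ * ‖x - 1‖ := by
    rw [← norm_mul, hid, norm_mul]
  -- norm of (θ-1) + Q is ‖Q‖
  have hsum : ‖(θ - 1) + Q‖ = ‖Q‖ := by
    rw [Padic.add_eq_max_of_ne (ne_of_lt hθq), max_eq_right hθq.le]
  -- ‖x - 1‖ ≤ max ‖d‖ ‖Q‖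
  have hx1 : ‖x - 1‖ ≤ max ‖d‖ ‖Q‖ := by
    have : x - 1 = d + (-((θ - 1) + Q)) := by rw [hddef]; ring
    rw [this]
    refine le_trans (Padic.nonarchimedean _ _) ?_
    rw [norm_neg, hsum]
  -- strict bound ‖θ-1‖ * ‖x-1‖ < ‖Q‖ * ‖d‖
  have key : ‖θ - 1‖ * ‖x - 1‖ < ‖Q‖ * ‖d‖ := by
    rcases le_total ‖d‖ ‖Q‖ with h | h
    · have h1 : ‖x - 1‖ ≤ ‖Q‖ := le_trans hx1 (by simp [max_eq_right h])
      calc ‖θ - 1‖ * ‖x - 1‖ ≤ ‖θ - 1‖ * ‖Q‖ :=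
            mul_le_mul_of_nonneg_left h1 (norm_nonneg _)
        _ < ‖d‖ * ‖Q‖ := mul_lt_mul_of_pos_right hx hQ0
        _ = ‖Q‖ * ‖d‖ := mul_comm _ _
    · have h1 : ‖x - 1‖ ≤ ‖d‖ := le_trans hx1 (by simp [max_eq_left h])
      calc ‖θ - 1‖ * ‖x - 1‖ ≤ ‖θ - 1‖ * ‖d‖ :=
            mul_le_mul_of_nonneg_left h1 (norm_nonneg _)
        _ < ‖Q‖ * ‖d‖ := mul_lt_mul_of_pos_right hθq hd0
  have hglt : ‖g - 1‖ < ‖Q‖ := by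
    have := hg1d.trans_lt key
    exact lt_of_mul_lt_mul_right this hd0.le
  have hgle1 : ‖g‖ ≤ 1 := by
    have : g = (g - 1) + 1 := by ring
    rw [this]
    refine le_trans (Padic.nonarchimedean _ _) ?_
    exact max_le (le_of_lt (lt_trans hglt hQ1)) (by simp)
  have hfg : pottsBethe p q k θ x = g ^ k := by
    have hden : x + θ + Q - 2 = d := by rw [hddef]; ring
    show ((θ * x + Q - 1) / (x + θ + Q - 2)) ^ k = g ^ k
    rw [hden, hgdef]
  have hf1 : ‖pottsBethe p q k θ x - 1‖ ≤ ‖g - 1‖ := by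
    rw [hfg]; exact pow_sub_one_norm_le g hgle1 k
  refine ⟨?_, lt_of_le_of_lt hf1 hglt, ?_⟩
  · calc ‖pottsBethe p q k θ x - 1‖ * ‖d‖ ≤ ‖g - 1‖ * ‖d‖ :=
        mul_le_mul_of_nonneg_right hf1 (norm_nonneg _)
      _ = ‖θ - 1‖ * ‖x - 1‖ := hg1d
  · have hrw : pottsBethe p q k θ x - (2 - Q - θ) =
        (pottsBethe p q k θ x - 1) + ((θ - 1) + Q) := by ring
    rw [hrw, Padic.add_eq_max_of_ne, hsum, max_eq_right]
    · exact le_of_lt (lt_of_le_of_lt hf1 hglt)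
    · rw [hsum]
      exact ne_of_lt (lt_of_le_of_lt hf1 hglt)

theorem stmt5 (p : ℕ) [Fact p.Prime] (hp : 3 ≤ p) (q k : ℕ) (hq : 1 ≤ q) (hk : 1 ≤ k)
    (θ : ℚ_[p]) (hθq : ‖θ - 1‖ < ‖(q : ℚ_[p])‖) (hqk : ‖(q : ℚ_[p])‖ < ‖(k : ℚ_[p])‖)
    (x : ℚ_[p]) (hx : ‖x - (2 - (q : ℚ_[p]) - θ)‖ > ‖θ - 1‖) :
    (∀ n : ℕ, (pottsBethe p q k θ)^[n] x ≠ 2 - (q : ℚ_[p]) - θ) ∧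
    Filter.Tendsto (fun n => (pottsBethe p q k θ)^[n] x) Filter.atTop (nhds 1) := by
  have hk1 : ‖(k : ℚ_[p])‖ ≤ 1 := by
    have := Padic.norm_int_le_one (p := p) (k : ℤ)
    simpa using this
  have hQ1 : ‖(q : ℚ_[p])‖ < 1 := lt_of_lt_of_le hqk hk1
  have hQ0 : 0 < ‖(q : ℚ_[p])‖ := lt_of_le_of_lt (norm_nonneg _) hθq
  set f := pottsBethe p q k θ with hfdef
  set y : ℕ → ℚ_[p] := fun n => f^[n] x with hydef
  have hystep : ∀ n, y (n + 1) = f (y n) := fun n => Function.iterate_succ_apply' f n x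
  -- invariance
  have inv : ∀ n, ‖y n - (2 - (q : ℚ_[p]) - θ)‖ > ‖θ - 1‖ := by
    intro n
    induction n with
    | zero => exact hx
    | succ n ih =>
        rw [hystep n]
        have h := step5 p q k θ hθq hQ1 (y n) ih
        rw [h.2.2]
        exact hθq
  constructor
  · intro n heq
    have h := inv n
    rw [show y n = f^[n] x from rfl, heq] at h
    simp only [sub_self, norm_zero] at h
    exact absurd h (not_lt.mpr (norm_nonneg _))
  · -- convergence
    set c : ℝ := ‖θ - 1‖ / ‖(q : ℚ_[p])‖ with hcdef
    have hc0 : 0 ≤ c := div_nonneg (norm_nonneg _) (norm_nonneg _)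
    have hc1 : c < 1 := (div_lt_one hQ0).mpr hθq
    have heq1 : ∀ n, ‖y (n + 1) - (2 - (q : ℚ_[p]) - θ)‖ = ‖(q : ℚ_[p])‖ := by
      intro n
      rw [hystep n]
      exact (step5 p q k θ hθq hQ1 (y n) (inv n)).2.2
    have hcontr : ∀ n, ‖y (n + 2) - 1‖ ≤ c * ‖y (n + 1) - 1‖ := by
      intro n
      have h := (step5 p q k θ hθq hQ1 (y (n + 1)) (inv (n + 1))).1
      rw [heq1 n, ← hfdef, ← hystep (n + 1)] at h
      rw [hcdef, div_mul_eq_mul_div, le_div_iff₀ hQ0]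
      linarith [h]
    have geo : ∀ n, ‖y (n + 1) - 1‖ ≤ c ^ n * ‖y 1 - 1‖ := by
      intro n
      induction n with
      | zero => simp
      | succ n ih =>
          calc ‖y (n + 2) - 1‖ ≤ c * ‖y (n + 1) - 1‖ := hcontr n
            _ ≤ c * (c ^ n * ‖y 1 - 1‖) := mul_le_mul_of_nonneg_left ih hc0
            _ = c ^ (n + 1) * ‖y 1 - 1‖ := by ring
    have htend0 : Filter.Tendsto (fun n => ‖y (n + 1) - 1‖) Filter.atTop (nhds 0) := by
      have hgeo : Filter.Tendsto (fun n : ℕ => c ^ n * ‖y 1 - 1‖) Filter.atTop (nhds 0) := by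
        have := (tendsto_pow_atTop_nhds_zero_of_lt_one hc0 hc1).mul_const ‖y 1 - 1‖
        simpa using this
      exact squeeze_zero (fun n => norm_nonneg _) geo hgeo
    have htend1 : Filter.Tendsto (fun n => y (n + 1)) Filter.atTop (nhds 1) := by
      rw [tendsto_iff_norm_sub_tendsto_zero]
      exact htend0
    exact (Filter.tendsto_add_atTop_iff_nat 1).mp htend1
end

section
/- Let p ≥ 3 be a prime, let q, k ≥ 1 be natural numbers and θ ∈ ℚ_p with |θ − 1|_p < |q|_p < |k|_p. If x ∈ ℚ_p satisfies |x − 1 + q|_p ≥ |q|_p, then all iterates satisfy f^n(x) ≠ 2 − q − θ and f^n(x) → 1 as n → ∞. -/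
private lemma geom_bound {p : ℕ} [Fact p.Prime] (k : ℕ) (t : ℚ_[p]) (ht : ‖t‖ ≤ 1) :
    ‖(1 + t) ^ k - 1‖ ≤ ‖t‖ := by
  have h1t : ‖1 + t‖ ≤ 1 := by
    refine le_trans (Padic.nonarchimedean _ _) ?_
    simp [ht]
  have hs : ∀ m : ℕ, ‖∑ i ∈ Finset.range m, (1 + t) ^ i‖ ≤ 1 := by
    intro m
    induction m with
    | zero => simp
    | succ n ih =>
      rw [Finset.sum_range_succ]
      refine le_trans (Padic.nonarchimedean _ _) (max_le ih ?_)
      calc ‖(1 + t) ^ n‖ = ‖1 + t‖ ^ n := norm_pow _ _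
        _ ≤ 1 := pow_le_one₀ (norm_nonneg _) h1t
  have h : (1 + t) ^ k - 1 = (∑ i ∈ Finset.range k, (1 + t) ^ i) * t := by
    have := geom_sum_mul (1 + t) k
    simpa using this.symm
  rw [h, norm_mul]
  calc ‖∑ i ∈ Finset.range k, (1 + t) ^ i‖ * ‖t‖ ≤ 1 * ‖t‖ :=
        mul_le_mul_of_nonneg_right (hs k) (norm_nonneg _)
    _ = ‖t‖ := one_mul _

private lemma step_bound {p : ℕ} [Fact p.Prime] (q k : ℕ) (θ : ℚ_[p])
    (hθq : ‖θ - 1‖ < ‖(q : ℚ_[p])‖) (hq1 : ‖(q : ℚ_[p])‖ ≤ 1)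
    (x : ℚ_[p]) (hx : ‖x - 1 + (q : ℚ_[p])‖ ≥ ‖(q : ℚ_[p])‖) :
    ‖pottsBethe p q k θ x - 1‖ ≤ ‖θ - 1‖ ∧
    ‖(q : ℚ_[p])‖ * ‖pottsBethe p q k θ x - 1‖ ≤ ‖θ - 1‖ * ‖x - 1‖ := by
  set D : ℚ_[p] := x + θ + (q : ℚ_[p]) - 2 with hD
  have hDeq : D = (x - 1 + (q : ℚ_[p])) + (θ - 1) := by ring
  have hcq : (0 : ℝ) < ‖(q : ℚ_[p])‖ := lt_of_le_of_lt (norm_nonneg _) hθq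
  have hDnorm : ‖D‖ = ‖x - 1 + (q : ℚ_[p])‖ := by
    rw [hDeq, Padic.add_eq_max_of_ne (by exact ne_of_gt (lt_of_lt_of_le hθq hx))]
    exact max_eq_left (le_of_lt (lt_of_lt_of_le hθq hx))
  have hDge : ‖D‖ ≥ ‖(q : ℚ_[p])‖ := by rw [hDnorm]; exact hx
  have hDpos : (0 : ℝ) < ‖D‖ := lt_of_lt_of_le hcq hDge
  have hDne : D ≠ 0 := by
    intro h; rw [h, norm_zero] at hDpos; exact lt_irrefl _ hDpos
  have hx1D : ‖x - 1‖ ≤ ‖D‖ := by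
    rw [hDnorm]
    have h2 : x - 1 = (x - 1 + (q : ℚ_[p])) + (-(q : ℚ_[p])) := by ring
    calc ‖x - 1‖ = ‖(x - 1 + (q : ℚ_[p])) + (-(q : ℚ_[p]))‖ := by rw [← h2]
      _ ≤ max ‖x - 1 + (q : ℚ_[p])‖ ‖-(q : ℚ_[p])‖ := Padic.nonarchimedean _ _
      _ ≤ ‖x - 1 + (q : ℚ_[p])‖ := max_le le_rfl (by rw [norm_neg]; exact hx)
  set t : ℚ_[p] := (θ - 1) * (x - 1) / D with htdef
  have hfx : pottsBethe p q k θ x = (1 + t) ^ k := by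
    unfold pottsBethe
    congr 1
    rw [htdef, ← hD]
    field_simp
    ring
  have htD : ‖t‖ * ‖D‖ = ‖θ - 1‖ * ‖x - 1‖ := by
    rw [htdef, norm_div, norm_mul, div_mul_cancel₀ _ (ne_of_gt hDpos)]
  have ht1 : ‖t‖ ≤ ‖θ - 1‖ := by
    have : ‖t‖ * ‖D‖ ≤ ‖θ - 1‖ * ‖D‖ := by
      rw [htD]; exact mul_le_mul_of_nonneg_left hx1D (norm_nonneg _)
    exact le_of_mul_le_mul_right this hDpos
  have htle1 : ‖t‖ ≤ 1 := le_trans ht1 (le_trans (le_of_lt hθq) hq1)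
  have hmain : ‖pottsBethe p q k θ x - 1‖ ≤ ‖t‖ := by
    rw [hfx]; exact geom_bound k t htle1
  constructor
  · exact le_trans hmain ht1
  · calc ‖(q : ℚ_[p])‖ * ‖pottsBethe p q k θ x - 1‖
        ≤ ‖(q : ℚ_[p])‖ * ‖t‖ := mul_le_mul_of_nonneg_left hmain (le_of_lt hcq)
      _ ≤ ‖D‖ * ‖t‖ := mul_le_mul_of_nonneg_right hDge (norm_nonneg _)
      _ = ‖θ - 1‖ * ‖x - 1‖ := by rw [mul_comm]; exact htD

theorem stmt6 (p : ℕ) [Fact p.Prime] (hp : 3 ≤ p) (q k : ℕ) (hq : 1 ≤ q) (hk : 1 ≤ k)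
    (θ : ℚ_[p]) (hθq : ‖θ - 1‖ < ‖(q : ℚ_[p])‖) (hqk : ‖(q : ℚ_[p])‖ < ‖(k : ℚ_[p])‖)
    (x : ℚ_[p]) (hx : ‖x - 1 + (q : ℚ_[p])‖ ≥ ‖(q : ℚ_[p])‖) :
    (∀ n : ℕ, (pottsBethe p q k θ)^[n] x ≠ 2 - (q : ℚ_[p]) - θ) ∧
    Filter.Tendsto (fun n => (pottsBethe p q k θ)^[n] x) Filter.atTop (nhds 1) := by
  have hcq : (0 : ℝ) < ‖(q : ℚ_[p])‖ := lt_of_le_of_lt (norm_nonneg _) hθq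
  have hq1 : ‖(q : ℚ_[p])‖ ≤ 1 := by
    have := Padic.norm_int_le_one (p := p) (q : ℤ)
    simpa using this
  -- invariant
  have hinv : ∀ n : ℕ, ‖(pottsBethe p q k θ)^[n] x - 1 + (q : ℚ_[p])‖ ≥ ‖(q : ℚ_[p])‖ := by
    intro n
    induction n with
    | zero => simpa using hx
    | succ n ih =>
      rw [Function.iterate_succ_apply']
      have hb := (step_bound q k θ hθq hq1 _ ih).1
      have hsmall : ‖pottsBethe p q k θ ((pottsBethe p q k θ)^[n] x) - 1‖ < ‖(q : ℚ_[p])‖ :=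
        lt_of_le_of_lt hb hθq
      have heq : ‖pottsBethe p q k θ ((pottsBethe p q k θ)^[n] x) - 1 + (q : ℚ_[p])‖
          = ‖(q : ℚ_[p])‖ := by
        rw [add_comm, Padic.add_eq_max_of_ne (ne_of_gt hsmall)]
        exact max_eq_left (le_of_lt hsmall)
      rw [heq]
  constructor
  · intro n hpole
    have := hinv n
    rw [hpole] at this
    have h1 : (2 : ℚ_[p]) - (q : ℚ_[p]) - θ - 1 + (q : ℚ_[p]) = -(θ - 1) := by ring
    rw [h1, norm_neg] at this
    exact absurd hθq (not_lt.mpr this)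
  · set c : ℝ := ‖θ - 1‖ / ‖(q : ℚ_[p])‖ with hc
    have hc0 : 0 ≤ c := div_nonneg (norm_nonneg _) (le_of_lt hcq)
    have hc1 : c < 1 := (div_lt_one hcq).mpr hθq
    have hbound : ∀ n : ℕ, ‖(pottsBethe p q k θ)^[n + 1] x - 1‖ ≤ ‖θ - 1‖ * c ^ n := by
      intro n
      induction n with
      | zero =>
        simpa using (step_bound q k θ hθq hq1 x hx).1
      | succ n ih =>
        have h2 := (step_bound q k θ hθq hq1 _ (hinv (n + 1))).2
        rw [← Function.iterate_succ_apply' (pottsBethe p q k θ) (n + 1) x] at h2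
        have h3 : ‖(q : ℚ_[p])‖ * ‖(pottsBethe p q k θ)^[n + 1 + 1] x - 1‖
            ≤ ‖θ - 1‖ * (‖θ - 1‖ * c ^ n) :=
          le_trans h2 (mul_le_mul_of_nonneg_left ih (norm_nonneg _))
        have hrw : ‖θ - 1‖ * c ^ (n + 1) = ‖θ - 1‖ * (‖θ - 1‖ * c ^ n) / ‖(q : ℚ_[p])‖ := by
          rw [hc]; ring
        rw [hrw, le_div_iff₀ hcq, mul_comm _ ‖(q : ℚ_[p])‖]
        exact h3
    rw [tendsto_iff_norm_sub_tendsto_zero]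
    rw [← Filter.tendsto_add_atTop_iff_nat 1]
    have hgeo : Filter.Tendsto (fun n : ℕ => ‖θ - 1‖ * c ^ n) Filter.atTop (nhds 0) := by
      have := (tendsto_pow_atTop_nhds_zero_of_lt_one hc0 hc1).const_mul ‖θ - 1‖
      simpa using this
    exact squeeze_zero (fun n => norm_nonneg _) hbound hgeo
end

section
/- Let p ≥ 3 be a prime, let q, k ≥ 1 be natural numbers with |q|_p < |k|_p ≤ 1 and |q|_p < 1. Then for every a ∈ ℚ_p with |a − (1 − q)|_p < |q|_p², the equation x^k = a has exactly one solution x_* in 𝓔_p. -/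
variable {p : ℕ} [Fact p.Prime]

-- norm of a nonzero nat is p^{-v}
lemma norm_nat_eq_s12 (j : ℕ) (hj : j ≠ 0) :
    ‖(j : ℚ_[p])‖ = ((p:ℝ))⁻¹ ^ (j.factorization p) := by
  have hp := (Fact.out : p.Prime)
  have key : (j : ℚ_[p]) = (p:ℚ_[p]) ^ (j.factorization p) * ((j / p ^ j.factorization p : ℕ) : ℚ_[p]) := by
    rw [← Nat.cast_pow, ← Nat.cast_mul, Nat.ordProj_mul_ordCompl_eq_self j p]
  have hunit : ‖((j / p ^ j.factorization p : ℕ) : ℚ_[p])‖ = 1 := by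
    have hnd : ¬ (p:ℤ) ∣ ((j / p ^ j.factorization p : ℕ) : ℤ) := by
      exact_mod_cast fun h => Nat.not_dvd_ordCompl hp hj (Int.ofNat_dvd.mp h)
    rcases lt_or_eq_of_le (Padic.norm_int_le_one (p := p) ((j / p ^ j.factorization p : ℕ):ℤ)) with h1 | h1
    · exact absurd (Padic.norm_intCast_lt_one_iff.mp h1) hnd
    · exact_mod_cast h1
  rw [key, norm_mul, norm_pow, Padic.norm_p]
  push_cast at hunit ⊢
  rw [hunit, mul_one]

-- Lemma A
lemma norm_nat_ge (hp3 : 3 ≤ p) (j : ℕ) (hj : 2 ≤ j) :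
    ((p:ℝ))⁻¹ ^ (j - 2) ≤ ‖(j : ℚ_[p])‖ := by
  have hp := (Fact.out : p.Prime)
  have hj0 : j ≠ 0 := by omega
  rw [norm_nat_eq_s12 j hj0]
  have hple : (1:ℝ)/p ≤ 1 := by
    rw [div_le_one (by positivity)]; exact_mod_cast hp.one_le
  have hv : j.factorization p ≤ j - 2 := by
    by_contra hcon
    push_neg at hcon
    have h1 : p ^ (j.factorization p) ≤ j := Nat.ordProj_le p hj0
    have h2 : p ^ (j - 1) ≤ p ^ (j.factorization p) := Nat.pow_le_pow_right hp.pos (by omega)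
    have h3 : j < 3 ^ (j - 1) := by
      calc j ≤ 2 ^ (j-1) := by have := Nat.lt_two_pow_self (n := j-1); omega
      _ < 3 ^ (j-1) := Nat.pow_lt_pow_left (by norm_num) (by omega)
    have h4 : (3:ℕ) ^ (j-1) ≤ p ^ (j-1) := Nat.pow_le_pow_left hp3 _
    omega
  exact pow_le_pow_of_le_one (by positivity) (by
    rw [inv_le_one₀ (by exact_mod_cast hp.pos)]; exact_mod_cast hp.one_le) hv

-- Lemma B
lemma binom_est (hp3 : 3 ≤ p) (k : ℕ) (s : ℚ_[p]) (hs : ‖s‖ ≤ (p:ℝ)⁻¹) :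
    ‖(1 + s)^k - 1 - k * s‖ ≤ ‖(k:ℚ_[p])‖ * ‖s‖^2 := by
  have hp := (Fact.out : p.Prime)
  rcases Nat.eq_zero_or_pos k with rfl | hk
  · simp
  have expand : ((1:ℚ_[p]) + s)^k = ∑ j ∈ Finset.range (k+1), s^j * (k.choose j : ℚ_[p]) := by
    rw [add_comm (1:ℚ_[p]) s, add_pow]
    simp
  have split : ((1:ℚ_[p]) + s)^k - 1 - k * s = ∑ j ∈ Finset.Ico 2 (k+1), s^j * (k.choose j : ℚ_[p]) := by
    rw [expand, Finset.range_eq_Ico,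
      Finset.sum_eq_sum_Ico_succ_bot (by omega : 0 < k+1),
      Finset.sum_eq_sum_Ico_succ_bot (by omega : 1 < k+1)]
    simp
    ring
  rw [split]
  apply IsUltrametricDist.norm_sum_le_of_forall_le_of_nonneg (by positivity)
  intro j hj
  rw [Finset.mem_Ico] at hj
  obtain ⟨hj2, hjk⟩ := hj
  -- key identity
  have hid : (j : ℚ_[p]) * (k.choose j : ℚ_[p]) = (k : ℚ_[p]) * ((k-1).choose (j-1) : ℚ_[p]) := by
    have : j * k.choose j = k * (k-1).choose (j-1) := by
      obtain ⟨k', rfl⟩ : ∃ k', k = k' + 1 := ⟨k - 1, by omega⟩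
      obtain ⟨j', rfl⟩ : ∃ j', j = j' + 1 := ⟨j - 1, by omega⟩
      simpa [mul_comm] using (Nat.add_one_mul_choose_eq k' j').symm
    exact_mod_cast congrArg (fun n : ℕ => (n : ℚ_[p])) this
  have hjne : (j:ℚ_[p]) ≠ 0 := by
    simp only [Ne, Nat.cast_eq_zero]; omega
  have hnormj : ‖(j:ℚ_[p])‖ ≠ 0 := norm_ne_zero_iff.mpr hjne
  have hC1 : ‖(((k-1).choose (j-1) : ℕ) : ℚ_[p])‖ ≤ 1 := by
    exact_mod_cast Padic.norm_int_le_one (p := p) ((((k-1).choose (j-1) : ℕ)) : ℤ)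
  have hchoose_le : ‖(k.choose j : ℚ_[p])‖ * ‖(j:ℚ_[p])‖ ≤ ‖(k:ℚ_[p])‖ := by
    have heq : ‖(k.choose j : ℚ_[p])‖ * ‖(j:ℚ_[p])‖ = ‖(k:ℚ_[p])‖ * ‖(((k-1).choose (j-1):ℕ) : ℚ_[p])‖ := by
      rw [← norm_mul, ← norm_mul, mul_comm ((k.choose j : ℚ_[p])) ((j:ℚ_[p])), hid]
    rw [heq]
    exact mul_le_of_le_one_right (norm_nonneg _) hC1
  have hsj : ‖s‖ ^ (j - 2) ≤ ‖(j:ℚ_[p])‖ := by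
    calc ‖s‖ ^ (j-2) ≤ ((p:ℝ))⁻¹ ^ (j-2) := pow_le_pow_left₀ (norm_nonneg s) hs _
      _ ≤ ‖(j:ℚ_[p])‖ := norm_nat_ge hp3 j hj2
  rw [norm_mul, norm_pow]
  have hdecomp : ‖s‖ ^ j = ‖s‖^(j-2) * ‖s‖^2 := by
    rw [← pow_add]; congr 1; omega
  rw [hdecomp, mul_comm (‖s‖^(j-2) * ‖s‖^2)]
  calc ‖(k.choose j : ℚ_[p])‖ * (‖s‖^(j-2) * ‖s‖^2)
      = (‖(k.choose j : ℚ_[p])‖ * ‖s‖^(j-2)) * ‖s‖^2 := by ring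
    _ ≤ (‖(k.choose j : ℚ_[p])‖ * ‖(j:ℚ_[p])‖) * ‖s‖^2 := by gcongr
    _ ≤ ‖(k:ℚ_[p])‖ * ‖s‖^2 := by gcongr

-- Lemma C
lemma norm_pow_sub_one (hp3 : 3 ≤ p) (k : ℕ) (hk : 1 ≤ k) (s : ℚ_[p]) (hs : ‖s‖ ≤ (p:ℝ)⁻¹) :
    ‖(1 + s)^k - 1‖ = ‖(k:ℚ_[p])‖ * ‖s‖ := by
  have hp := (Fact.out : p.Prime)
  rcases eq_or_ne s 0 with rfl | hs0
  · simp
  have hkne : (k:ℚ_[p]) ≠ 0 := Nat.cast_ne_zero.mpr (by omega)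
  have hknorm : 0 < ‖(k:ℚ_[p])‖ := norm_pos_iff.mpr hkne
  have hsnorm : 0 < ‖s‖ := norm_pos_iff.mpr hs0
  have hslt1 : ‖s‖ < 1 := lt_of_le_of_lt hs (by
    rw [inv_lt_one₀ (by exact_mod_cast hp.pos)]; exact_mod_cast hp.one_lt)
  have hE : ‖(1 + s)^k - 1 - k * s‖ < ‖(k:ℚ_[p]) * s‖ := by
    calc ‖(1 + s)^k - 1 - k * s‖ ≤ ‖(k:ℚ_[p])‖ * ‖s‖^2 := binom_est hp3 k s hs
      _ < ‖(k:ℚ_[p])‖ * ‖s‖ := by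
          rw [sq]
          have : ‖s‖ * ‖s‖ < 1 * ‖s‖ := by gcongr
          rw [one_mul] at this
          exact (mul_lt_mul_iff_right₀ hknorm).mpr this
      _ = ‖(k:ℚ_[p]) * s‖ := (norm_mul _ _).symm
  have hdecomp : (1 + s)^k - 1 = (k:ℚ_[p]) * s + ((1 + s)^k - 1 - k * s) := by ring
  rw [hdecomp]
  rw [Padic.add_eq_max_of_ne hE.ne', max_eq_left hE.le, norm_mul]

lemma norm_lt_one_le_inv_p {x : ℚ_[p]} (h : ‖x‖ < 1) : ‖x‖ ≤ (p:ℝ)⁻¹ := by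
  have := (Padic.norm_le_pow_iff_norm_lt_pow_add_one x (-1)).mpr (by simpa using h)
  simpa [zpow_neg_one] using this

lemma norm_one_of_close {y : ℚ_[p]} (h : ‖y - 1‖ < 1) : ‖y‖ = 1 := by
  have : y = 1 + (y - 1) := by ring
  rw [this, Padic.add_eq_max_of_ne (by rw [norm_one]; exact h.ne')]
  rw [norm_one, max_eq_left h.le]

lemma root_unique (hp3 : 3 ≤ p) (k : ℕ) (hk : 1 ≤ k) {x y : ℚ_[p]}
    (hx : ‖x - 1‖ < 1) (hy : ‖y - 1‖ < 1) (h : x ^ k = y ^ k) : x = y := by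
  have hyn : ‖y‖ = 1 := norm_one_of_close hy
  have hy0 : y ≠ 0 := by intro h0; rw [h0] at hyn; simp at hyn
  set u := x / y with hu
  have hus : ‖u - 1‖ ≤ (p:ℝ)⁻¹ := by
    have : u - 1 = (x - y) / y := by rw [hu, sub_div, div_self hy0]
    rw [this, norm_div, hyn, div_one]
    have : x - y = (x - 1) - (y - 1) := by ring
    rw [this]
    apply norm_lt_one_le_inv_p
    calc ‖(x-1) - (y-1)‖ = ‖(x-1) + (-(y-1))‖ := by rw [sub_eq_add_neg]
      _ ≤ max ‖x-1‖ ‖-(y-1)‖ := IsUltrametricDist.norm_add_le_max _ _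
      _ = max ‖x-1‖ ‖y-1‖ := by rw [norm_neg]
      _ < 1 := max_lt hx hy
  have huk : u ^ k = 1 := by
    rw [hu, div_pow, h, div_self (pow_ne_zero _ hy0)]
  have : ‖(1 + (u - 1))^k - 1‖ = ‖(k:ℚ_[p])‖ * ‖u - 1‖ := norm_pow_sub_one hp3 k hk _ hus
  rw [show (1:ℚ_[p]) + (u - 1) = u by ring, huk] at this
  simp only [sub_self, norm_zero] at this
  have hkne : (k:ℚ_[p]) ≠ 0 := Nat.cast_ne_zero.mpr (by omega)
  have : ‖u - 1‖ = 0 := by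
    rcases mul_eq_zero.mp this.symm with h1 | h1
    · exact absurd h1 (norm_ne_zero_iff.mpr hkne)
    · exact h1
  have : u = 1 := by
    have := norm_eq_zero.mp this
    have : u = 1 := by linear_combination this
    exact this
  rw [hu] at this
  exact div_eq_one_iff_eq hy0 |>.mp this

lemma hensel_pow (k : ℕ) (hk : 1 ≤ k) (a x₀ : ℚ_[p]) (ha : ‖a‖ ≤ 1) (hx : ‖x₀‖ ≤ 1)
    (h : ‖x₀ ^ k - a‖ < ‖(k:ℚ_[p]) * x₀^(k-1)‖ ^ 2) :
    ∃ z : ℚ_[p], ‖z‖ ≤ 1 ∧ z ^ k = a ∧ ‖z - x₀‖ < ‖(k:ℚ_[p]) * x₀^(k-1)‖ := by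
  set A : ℤ_[p] := ⟨a, ha⟩ with hA
  set X₀ : ℤ_[p] := ⟨x₀, hx⟩ with hX₀
  set F : Polynomial ℤ_[p] := Polynomial.X ^ k - Polynomial.C A with hF
  have hFeval : ∀ t : ℤ_[p], F.eval t = t ^ k - A := by intro t; simp [hF]
  have hFdeval : ∀ t : ℤ_[p], F.derivative.eval t = (k:ℤ_[p]) * t ^ (k-1) := by
    intro t
    rw [hF, Polynomial.derivative_sub, Polynomial.derivative_C, Polynomial.derivative_X_pow]
    simp
  have hcoe : ∀ t : ℤ_[p], ((t ^ k - A : ℤ_[p]) : ℚ_[p]) = (t:ℚ_[p])^k - a := by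
    intro t; rw [PadicInt.coe_sub, PadicInt.coe_pow]
  have hdercoe : (((k:ℤ_[p]) * X₀ ^ (k-1) : ℤ_[p]) : ℚ_[p]) = (k:ℚ_[p]) * x₀^(k-1) := by
    rw [PadicInt.coe_mul, PadicInt.coe_pow, PadicInt.coe_natCast]
  have hnorm : ‖F.eval X₀‖ < ‖F.derivative.eval X₀‖ ^ 2 := by
    rw [hFeval, hFdeval, PadicInt.norm_def, PadicInt.norm_def, hcoe, hdercoe]
    exact h
  obtain ⟨z, hz0, hzdist, _, _⟩ := hensels_lemma hnorm
  simp only [Polynomial.coe_aeval_eq_eval] at hz0 hzdist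
  refine ⟨(z : ℚ_[p]), z.2, ?_, ?_⟩
  · rw [hFeval] at hz0
    have : ((z ^ k - A : ℤ_[p]) : ℚ_[p]) = 0 := by rw [hz0]; rfl
    rw [hcoe] at this
    exact sub_eq_zero.mp this
  · have h1 : ‖z - X₀‖ = ‖(z:ℚ_[p]) - x₀‖ := by rw [PadicInt.norm_def, PadicInt.coe_sub]
    have h2 : ‖Polynomial.eval X₀ (Polynomial.derivative F)‖ = ‖(k:ℚ_[p]) * x₀^(k-1)‖ := by
      rw [hFdeval, PadicInt.norm_def, hdercoe]
    rw [h1, h2] at hzdist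
    exact hzdist

lemma norm_le_one_of_close {a : ℚ_[p]} (h : ‖a - 1‖ ≤ 1) : ‖a‖ ≤ 1 := by
  have : a = 1 + (a - 1) := by ring
  rw [this]
  calc ‖1 + (a-1)‖ ≤ max ‖(1:ℚ_[p])‖ ‖a-1‖ := IsUltrametricDist.norm_add_le_max _ _
    _ ≤ 1 := by rw [norm_one]; exact max_le le_rfl h

lemma pth_root (hp3 : 3 ≤ p) (a : ℚ_[p]) (ha : ‖a - 1‖ ≤ ((p:ℝ))⁻¹ ^ 2) :
    ∃ w : ℚ_[p], ‖w - 1‖ ≤ (p:ℝ)⁻¹ ∧ w ^ p = a := by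
  have hp := (Fact.out : p.Prime)
  have hppos : (0:ℝ) < p := by exact_mod_cast hp.pos
  have hpinv : (p:ℝ)⁻¹ < 1 := by
    rw [inv_lt_one₀ hppos]; exact_mod_cast hp.one_lt
  set s : ℚ_[p] := (a - 1) / p with hs
  have hpne : (p:ℚ_[p]) ≠ 0 := by
    exact_mod_cast Nat.cast_ne_zero.mpr hp.ne_zero
  have hsnorm : ‖s‖ = (p:ℝ) * ‖a - 1‖ := by
    rw [hs, norm_div, Padic.norm_p]
    field_simp
  have hsle : ‖s‖ ≤ (p:ℝ)⁻¹ := by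
    rw [hsnorm]
    calc (p:ℝ) * ‖a-1‖ ≤ (p:ℝ) * ((p:ℝ)⁻¹^2) := by gcongr
      _ = (p:ℝ)⁻¹ := by field_simp [sq]
  have hx0 : ‖(1 + s : ℚ_[p])‖ ≤ 1 := by
    apply norm_le_one_of_close
    simpa using hsle.trans hpinv.le
  have hanorm : ‖a‖ ≤ 1 := norm_le_one_of_close (ha.trans (by nlinarith [hpinv, inv_pos.mpr hppos]))
  have hps : (p:ℚ_[p]) * s = a - 1 := by
    rw [hs, mul_div_cancel₀ _ hpne]
  have hkey : (1+s)^p - a = (1 + s)^p - 1 - p * s := by rw [hps]; ring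
  have hx0norm1 : ‖(1+s:ℚ_[p])‖ = 1 := by
    apply norm_one_of_close
    simpa using hsle.trans_lt hpinv
  have hderiv : ‖(p:ℚ_[p]) * (1+s)^(p-1)‖ = (p:ℝ)⁻¹ := by
    rw [norm_mul, norm_pow, hx0norm1, one_pow, mul_one, Padic.norm_p]
  have hcond : ‖(1+s)^p - a‖ < ‖(p:ℚ_[p]) * (1+s)^(p-1)‖ ^ 2 := by
    rw [hkey, hderiv]
    calc ‖(1 + s)^p - 1 - p * s‖ ≤ ‖(p:ℚ_[p])‖ * ‖s‖^2 := binom_est hp3 p s hsle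
      _ ≤ (p:ℝ)⁻¹ * ((p:ℝ)⁻¹)^2 := by
          rw [Padic.norm_p]; gcongr
      _ < ((p:ℝ)⁻¹)^2 := by
          have h1 : (0:ℝ) < ((p:ℝ)⁻¹)^2 := by positivity
          nlinarith [hpinv]
  obtain ⟨z, hz1, hzp, hzdist⟩ := hensel_pow p hp.one_lt.le a (1+s) hanorm hx0 hcond
  refine ⟨z, ?_, hzp⟩
  have : z - 1 = (z - (1+s)) + s := by ring
  rw [this]
  calc ‖(z - (1+s)) + s‖ ≤ max ‖z - (1+s)‖ ‖s‖ := IsUltrametricDist.norm_add_le_max _ _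
    _ ≤ (p:ℝ)⁻¹ := max_le (by rw [hderiv] at hzdist; exact hzdist.le) hsle

lemma root_exists (hp3 : 3 ≤ p) : ∀ k : ℕ, 1 ≤ k → ∀ a : ℚ_[p],
    ‖a - 1‖ ≤ ‖(k:ℚ_[p])‖ * (p:ℝ)⁻¹ → ∃ x : ℚ_[p], ‖x - 1‖ ≤ (p:ℝ)⁻¹ ∧ x ^ k = a := by
  have hp := (Fact.out : p.Prime)
  have hppos : (0:ℝ) < p := by exact_mod_cast hp.pos
  have hpinv1 : (p:ℝ)⁻¹ < 1 := by rw [inv_lt_one₀ hppos]; exact_mod_cast hp.one_lt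
  intro k
  induction k using Nat.strong_induction_on with
  | _ k IH =>
  intro hk a ha
  have hknorm_le : ‖(k:ℚ_[p])‖ ≤ 1 := by
    exact_mod_cast Padic.norm_int_le_one (p := p) (k : ℤ)
  by_cases hdvd : p ∣ k
  · obtain ⟨k', rfl⟩ := hdvd
    have hk' : 1 ≤ k' := by
      rcases Nat.eq_zero_or_pos k' with rfl | h
      · simp at hk
      · exact h
    have hklt : k' < p * k' := by
      have := Nat.mul_lt_mul_of_lt_of_le (show 1 < p by omega) (le_refl k') (by omega)
      simpa using this
    have hsplit : ‖((p * k' : ℕ):ℚ_[p])‖ = (p:ℝ)⁻¹ * ‖(k':ℚ_[p])‖ := by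
      push_cast
      rw [norm_mul, Padic.norm_p]
    have hk'norm_le : ‖(k':ℚ_[p])‖ ≤ 1 := by
      exact_mod_cast Padic.norm_int_le_one (p := p) (k' : ℤ)
    have ha2 : ‖a - 1‖ ≤ ((p:ℝ))⁻¹ ^ 2 := by
      calc ‖a - 1‖ ≤ ‖((p * k' : ℕ):ℚ_[p])‖ * (p:ℝ)⁻¹ := ha
        _ = (p:ℝ)⁻¹ * ‖(k':ℚ_[p])‖ * (p:ℝ)⁻¹ := by rw [hsplit]
        _ ≤ (p:ℝ)⁻¹ * 1 * (p:ℝ)⁻¹ := by gcongr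
        _ = ((p:ℝ))⁻¹ ^ 2 := by ring
    obtain ⟨w, hw1, hwp⟩ := pth_root hp3 a ha2
    have hwnorm : ‖a - 1‖ = (p:ℝ)⁻¹ * ‖w - 1‖ := by
      have h := norm_pow_sub_one hp3 p hp.one_lt.le (w - 1) hw1
      rw [show (1:ℚ_[p]) + (w - 1) = w by ring, hwp, Padic.norm_p] at h
      exact h
    have hw2 : ‖w - 1‖ ≤ ‖(k':ℚ_[p])‖ * (p:ℝ)⁻¹ := by
      have : (p:ℝ)⁻¹ * ‖w - 1‖ ≤ (p:ℝ)⁻¹ * ‖(k':ℚ_[p])‖ * (p:ℝ)⁻¹ := by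
        rw [← hwnorm]
        calc ‖a - 1‖ ≤ ‖((p * k' : ℕ):ℚ_[p])‖ * (p:ℝ)⁻¹ := ha
          _ = (p:ℝ)⁻¹ * ‖(k':ℚ_[p])‖ * (p:ℝ)⁻¹ := by rw [hsplit]
      have hinvpos : (0:ℝ) < (p:ℝ)⁻¹ := by positivity
      calc ‖w - 1‖ = (p:ℝ)⁻¹ * ‖w-1‖ / (p:ℝ)⁻¹ := by field_simp
        _ ≤ (p:ℝ)⁻¹ * ‖(k':ℚ_[p])‖ * (p:ℝ)⁻¹ / (p:ℝ)⁻¹ := by gcongr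
        _ = ‖(k':ℚ_[p])‖ * (p:ℝ)⁻¹ := by field_simp
    obtain ⟨x, hx1, hxk⟩ := IH k' hklt hk' w hw2
    refine ⟨x, hx1, ?_⟩
    rw [show p * k' = k' * p by ring, pow_mul, hxk, hwp]
  · have hknorm : ‖(k:ℚ_[p])‖ = 1 := by
      rcases lt_or_eq_of_le hknorm_le with h1 | h1
      · exfalso
        have := (Padic.norm_intCast_lt_one_iff (p := p) (k := (k:ℤ))).mp (by exact_mod_cast h1)
        exact hdvd (by exact_mod_cast this)
      · exact h1
    have hanorm : ‖a‖ ≤ 1 := by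
      apply norm_le_one_of_close
      calc ‖a - 1‖ ≤ ‖(k:ℚ_[p])‖ * (p:ℝ)⁻¹ := ha
        _ ≤ 1 * 1 := by
            apply mul_le_mul hknorm_le hpinv1.le (by positivity) (by norm_num)
        _ = 1 := by norm_num
    have hcond : ‖(1:ℚ_[p]) ^ k - a‖ < ‖(k:ℚ_[p]) * (1:ℚ_[p])^(k-1)‖ ^ 2 := by
      rw [one_pow, one_pow, mul_one, hknorm, one_pow]
      calc ‖(1:ℚ_[p]) - a‖ = ‖a - 1‖ := by rw [← norm_neg]; congr 1; ring
        _ ≤ ‖(k:ℚ_[p])‖ * (p:ℝ)⁻¹ := ha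
        _ ≤ 1 * (p:ℝ)⁻¹ := by gcongr
        _ < 1 := by rw [one_mul]; exact hpinv1
    obtain ⟨z, hz1, hzk, hzdist⟩ := hensel_pow k hk a 1 hanorm (by norm_num) hcond
    refine ⟨z, ?_, hzk⟩
    apply norm_lt_one_le_inv_p
    rw [one_pow, mul_one, hknorm] at hzdist
    exact hzdist

theorem stmt12 (p : ℕ) [Fact p.Prime] (hp : 3 ≤ p) (q k : ℕ) (hq : 1 ≤ q) (hk : 1 ≤ k)
    (hqk : ‖(q : ℚ_[p])‖ < ‖(k : ℚ_[p])‖) (hk1 : ‖(k : ℚ_[p])‖ ≤ 1)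
    (hq1 : ‖(q : ℚ_[p])‖ < 1)
    (a : ℚ_[p]) (ha : ‖a - (1 - (q : ℚ_[p]))‖ < ‖(q : ℚ_[p])‖ ^ 2) :
    ∃! x : ℚ_[p], ‖x - 1‖ < 1 ∧ x ^ k = a := by
  have hpp := (Fact.out : p.Prime)
  have hppos : (0:ℝ) < p := by exact_mod_cast hpp.pos
  have hpinv1 : (p:ℝ)⁻¹ < 1 := by rw [inv_lt_one₀ hppos]; exact_mod_cast hpp.one_lt
  have hqnorm_le : ‖(q:ℚ_[p])‖ ≤ 1 := hq1.le
  have ha1 : ‖a - 1‖ ≤ ‖(q:ℚ_[p])‖ := by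
    have hdec : a - 1 = (a - (1 - q)) + (-(q:ℚ_[p])) := by ring
    rw [hdec]
    calc ‖(a - (1 - (q:ℚ_[p]))) + (-(q:ℚ_[p]))‖ ≤ max ‖a - (1 - (q:ℚ_[p]))‖ ‖-(q:ℚ_[p])‖ :=
          IsUltrametricDist.norm_add_le_max _ _
      _ ≤ ‖(q:ℚ_[p])‖ := by
          apply max_le
          · apply le_of_lt (lt_of_lt_of_le ha ?_)
            nlinarith [norm_nonneg ((q:ℚ_[p]))]
          · rw [norm_neg]
  have hkne : (k:ℚ_[p]) ≠ 0 := Nat.cast_ne_zero.mpr (by omega)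
  have hqk2 : ‖(q:ℚ_[p])‖ ≤ ‖(k:ℚ_[p])‖ * (p:ℝ)⁻¹ := by
    have hval : ‖(k:ℚ_[p])‖ = (p:ℝ) ^ (-(k:ℚ_[p]).valuation) := Padic.norm_eq_zpow_neg_valuation hkne
    have := (Padic.norm_le_pow_iff_norm_lt_pow_add_one (q:ℚ_[p]) (-(k:ℚ_[p]).valuation - 1)).mpr
      (by rw [sub_add_cancel, ← hval]; exact hqk)
    calc ‖(q:ℚ_[p])‖ ≤ (p:ℝ) ^ (-(k:ℚ_[p]).valuation - 1) := this
      _ = (p:ℝ) ^ (-(k:ℚ_[p]).valuation) * (p:ℝ)⁻¹ := by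
          rw [zpow_sub₀ (ne_of_gt hppos), zpow_one]
          ring
      _ = ‖(k:ℚ_[p])‖ * (p:ℝ)⁻¹ := by rw [hval]
  obtain ⟨x, hx1, hxk⟩ := root_exists hp k hk a (ha1.trans hqk2)
  have hx1' : ‖x - 1‖ < 1 := lt_of_le_of_lt hx1 hpinv1
  refine ⟨x, ⟨hx1', hxk⟩, ?_⟩
  rintro y ⟨hy1, hyk⟩
  exact root_unique hp k hk hy1 hx1' (hyk.trans hxk.symm)
end

section
/- Let p ≥ 3 be a prime, let q, k ≥ 1 be natural numbers and θ ∈ ℚ_p with |q|_p < |k|_p and |θ − 1|_p < |q|_p² < 1. Then for any two k-th roots of unity ξ, ξ′ ∈ ℚ_p, the ball B_r(x_ξ) is contained in the image f(B_r(x_{ξ′})): for every y ∈ B_r(x_ξ) there exists x ∈ B_r(x_{ξ′}) with f(x) = y. -/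
open scoped Classical

/-- The center `x_ξ` associated with a `k`-th root of unity `ξ`. -/
noncomputable def xiCenter (p : ℕ) [Fact p.Prime] (q k : ℕ) (θ ξ : ℚ_[p]) : ℚ_[p] :=
  if ξ = 1 then
    1 - (q : ℚ_[p]) + ((k : ℚ_[p]) - 1) *
      (1 - (q : ℚ_[p]) / 2 + ((k : ℚ_[p]) - 2) * (q : ℚ_[p]) ^ 2 / (6 * (k : ℚ_[p]))) * (θ - 1)
  else
    2 - (q : ℚ_[p]) - θ + (q : ℚ_[p]) * (θ - 1) / (1 - ξ)

/-- The union `X` of the balls of radius `r = ‖q (θ - 1)‖` around the centers `x_ξ`. -/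
def XSet (p : ℕ) [Fact p.Prime] (q k : ℕ) (θ : ℚ_[p]) : Set ℚ_[p] :=
  {x : ℚ_[p] | ∃ ξ : ℚ_[p], ξ ^ k = 1 ∧ ‖x - xiCenter p q k θ ξ‖ < ‖(q : ℚ_[p]) * (θ - 1)‖}

namespace Stmt15Aux
open Finset
variable {p : ℕ} [hp : Fact p.Prime]

lemma nsub_le_max (a b : ℚ_[p]) : ‖a - b‖ ≤ max ‖a‖ ‖b‖ := by
  rw [sub_eq_add_neg]
  simpa using Padic.nonarchimedean a (-b)

lemma nadd_le_max (a b : ℚ_[p]) : ‖a + b‖ ≤ max ‖a‖ ‖b‖ :=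
  Padic.nonarchimedean a b

lemma norm_eq_right {a b : ℚ_[p]} (h : ‖a - b‖ < ‖b‖) : ‖a‖ = ‖b‖ := by
  have h1 : ‖a‖ ≤ ‖b‖ := by
    have h2 := Padic.nonarchimedean (a - b) b
    simpa using h2.trans (max_le h.le le_rfl)
  refine le_antisymm h1 ?_
  by_contra hlt
  push_neg at hlt
  have h3 : ‖b‖ ≤ max ‖a‖ ‖a - b‖ := by
    have := nsub_le_max a (a - b)
    simpa using this
  have : ‖b‖ < ‖b‖ := lt_of_le_of_lt h3 (max_lt hlt h)
  exact absurd this (lt_irrefl _)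

lemma p_mul_norm_le {a b : ℚ_[p]} (ha : a ≠ 0) (h : ‖a‖ < ‖b‖) : (p : ℝ) * ‖a‖ ≤ ‖b‖ := by
  have hb : b ≠ 0 := by
    rintro rfl
    simp only [norm_zero] at h
    exact absurd (norm_nonneg a) (not_le.2 h)
  have hp1 : (1 : ℝ) < p := by exact_mod_cast hp.out.one_lt
  rw [Padic.norm_eq_zpow_neg_valuation ha, Padic.norm_eq_zpow_neg_valuation hb] at *
  have hv : -a.valuation < -b.valuation := (zpow_lt_zpow_iff_right₀ hp1).1 h
  calc (p:ℝ) * (p:ℝ) ^ (-a.valuation)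
      = (p:ℝ) ^ (-a.valuation + 1) := by
        rw [zpow_add_one₀ (by positivity)]; ring
    _ ≤ (p:ℝ) ^ (-b.valuation) := by
        apply zpow_le_zpow_right₀ hp1.le
        omega

lemma norm_natCast_le_one (n : ℕ) : ‖(n : ℚ_[p])‖ ≤ 1 := by
  have := Padic.norm_int_le_one (p := p) (n : ℤ)
  push_cast at this
  exact this

lemma one_le_pow_mul_norm (j m : ℕ) (hj : 0 < j) (hlt : j < p ^ (m + 1)) :
    1 ≤ (p : ℝ) ^ m * ‖(j : ℚ_[p])‖ := by
  set v := j.factorization p with hv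
  have hpp := hp.out
  have hj0 : j ≠ 0 := hj.ne'
  have hvm : v ≤ m := by
    by_contra hc
    push_neg at hc
    have h1 : p ^ v ≤ j := Nat.ordProj_le p hj0
    have h2 : p ^ (m + 1) ≤ p ^ v := Nat.pow_le_pow_right hpp.pos hc
    omega
  have hsplit : (j : ℚ_[p]) = (p : ℚ_[p]) ^ v * ((j / p ^ v : ℕ) : ℚ_[p]) := by
    exact_mod_cast (congrArg (fun n : ℕ => (n : ℚ_[p])) (Nat.ordProj_mul_ordCompl_eq_self j p)).symm
  have hcompl : ‖((j / p ^ v : ℕ) : ℚ_[p])‖ = 1 := by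
    refine le_antisymm (norm_natCast_le_one _) ?_
    by_contra hc
    push_neg at hc
    have : (p : ℤ) ∣ ((j / p ^ v : ℕ) : ℤ) := by
      refine (Padic.norm_intCast_lt_one_iff).1 ?_
      rw [Int.cast_natCast]
      exact hc
    have : p ∣ j / p ^ v := by exact_mod_cast this
    exact (Nat.not_dvd_ordCompl hpp hj0) this
  have hnorm : ‖(j : ℚ_[p])‖ = (p : ℝ)⁻¹ ^ v := by
    rw [hsplit, norm_mul, norm_pow, Padic.norm_p, hcompl, mul_one]
  rw [hnorm]
  have hp1 : (1 : ℝ) ≤ p := by exact_mod_cast hpp.one_le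
  rw [inv_pow, ← div_eq_mul_inv, le_div_iff₀ (by positivity), one_mul]
  exact pow_le_pow_right₀ hp1 hvm

lemma norm_choose_le {k j m : ℕ} (hk : 1 ≤ k) (hj : 1 ≤ j) (hlt : j < p ^ (m + 1)) :
    ‖((k.choose j : ℕ) : ℚ_[p])‖ ≤ ‖(k : ℚ_[p])‖ * (p : ℝ) ^ m := by
  have hid : (k : ℕ) * ((k - 1).choose (j - 1)) = k.choose j * j := by
    have := Nat.add_one_mul_choose_eq (k - 1) (j - 1)
    have e1 : k - 1 + 1 = k := by omega
    have e2 : j - 1 + 1 = j := by omega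
    rwa [e1, e2] at this
  have hidQ : (k : ℚ_[p]) * (((k - 1).choose (j - 1) : ℕ) : ℚ_[p])
      = ((k.choose j : ℕ) : ℚ_[p]) * (j : ℚ_[p]) := by exact_mod_cast congrArg (fun n : ℕ => (n : ℚ_[p])) hid
  have hnorm : ‖(k : ℚ_[p])‖ * ‖(((k - 1).choose (j - 1) : ℕ) : ℚ_[p])‖
      = ‖((k.choose j : ℕ) : ℚ_[p])‖ * ‖(j : ℚ_[p])‖ := by
    rw [← norm_mul, ← norm_mul, hidQ]
  have h1 : 1 ≤ (p : ℝ) ^ m * ‖(j : ℚ_[p])‖ := one_le_pow_mul_norm j m hj hlt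
  have hc1 : ‖(((k - 1).choose (j - 1) : ℕ) : ℚ_[p])‖ ≤ 1 := norm_natCast_le_one _
  calc ‖((k.choose j : ℕ) : ℚ_[p])‖
      ≤ ‖((k.choose j : ℕ) : ℚ_[p])‖ * ((p : ℝ) ^ m * ‖(j : ℚ_[p])‖) := by
        exact le_mul_of_one_le_right (norm_nonneg _) h1
    _ = (p : ℝ) ^ m * (‖((k.choose j : ℕ) : ℚ_[p])‖ * ‖(j : ℚ_[p])‖) := by ring
    _ = (p : ℝ) ^ m * (‖(k : ℚ_[p])‖ * ‖(((k - 1).choose (j - 1) : ℕ) : ℚ_[p])‖) := by rw [hnorm]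
    _ ≤ (p : ℝ) ^ m * (‖(k : ℚ_[p])‖ * 1) := by gcongr
    _ = ‖(k : ℚ_[p])‖ * (p : ℝ) ^ m := by ring

omit hp in
lemma nat_lt_pow1 (hp3 : 3 ≤ p) {j : ℕ} (hj : 2 ≤ j) : j < p ^ (j - 2 + 1) := by
  have h3 : ∀ n : ℕ, n + 2 < 3 ^ (n + 1) := by
    intro n
    induction n with
    | zero => norm_num
    | succ n ih =>
      have : 3 ^ (n + 1) + 1 ≤ 3 ^ (n + 2) := by
        have h9 : 3 ^ (n + 2) = 3 * 3 ^ (n + 1) := by ring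
        omega
      omega
  have := h3 (j - 2)
  have h3p : (3:ℕ) ^ (j - 2 + 1) ≤ p ^ (j - 2 + 1) := Nat.pow_le_pow_left hp3 _
  omega

omit hp in
lemma nat_lt_pow2 (hp3 : 3 ≤ p) {j : ℕ} (hj : 4 ≤ j) : j < p ^ (j - 3 + 1) := by
  have h3 : ∀ n : ℕ, n + 4 < 3 ^ (n + 2) := by
    intro n
    induction n with
    | zero => norm_num
    | succ n ih =>
      have h9 : 3 ^ (n + 1 + 2) = 3 * 3 ^ (n + 2) := by ring
      omega
  have := h3 (j - 4)
  have heq : j - 4 + 2 = j - 3 + 1 := by omega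
  rw [heq] at this
  have h3p : (3:ℕ) ^ (j - 3 + 1) ≤ p ^ (j - 3 + 1) := Nat.pow_le_pow_left hp3 _
  omega

lemma term_bound {k j a : ℕ} (hk : 1 ≤ k) (ha : 1 ≤ a) (hj : a ≤ j) (hlt : j < p ^ (j - a + 1))
    {t : ℚ_[p]} {ρ : ℝ} (ht : ‖t‖ ≤ ρ) (hρ : (p : ℝ) * ρ ≤ 1) :
    ‖((k.choose j : ℕ) : ℚ_[p]) * t ^ j‖ ≤ ‖(k : ℚ_[p])‖ * ρ ^ a := by
  have hρ0 : 0 ≤ ρ := le_trans (norm_nonneg t) ht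
  have hp0 : (0:ℝ) ≤ p := by positivity
  have hC : ‖((k.choose j : ℕ) : ℚ_[p])‖ ≤ ‖(k : ℚ_[p])‖ * (p : ℝ) ^ (j - a) :=
    norm_choose_le hk (le_trans ha hj) hlt
  have htj : ‖t ^ j‖ ≤ ρ ^ j := by
    rw [norm_pow]
    exact pow_le_pow_left₀ (norm_nonneg t) ht j
  have hsplit : ρ ^ j = ρ ^ a * ρ ^ (j - a) := by
    rw [← pow_add]
    congr 1
    omega
  have hmain : ((p:ℝ) ^ (j - a)) * (ρ ^ (j - a)) ≤ 1 := by
    rw [← mul_pow]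
    exact pow_le_one₀ (by positivity) hρ
  calc ‖((k.choose j : ℕ) : ℚ_[p]) * t ^ j‖ = ‖((k.choose j : ℕ) : ℚ_[p])‖ * ‖t ^ j‖ := norm_mul _ _
    _ ≤ (‖(k : ℚ_[p])‖ * (p : ℝ) ^ (j - a)) * ρ ^ j := by
        apply mul_le_mul hC htj (norm_nonneg _)
        positivity
    _ = (‖(k : ℚ_[p])‖ * ρ ^ a) * ((p:ℝ) ^ (j - a) * ρ ^ (j - a)) := by rw [hsplit]; ring
    _ ≤ (‖(k : ℚ_[p])‖ * ρ ^ a) * 1 := by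
        apply mul_le_mul_of_nonneg_left hmain
        positivity
    _ = ‖(k : ℚ_[p])‖ * ρ ^ a := by ring

lemma sum_bound {k n a b : ℕ} (hk : 1 ≤ k) (hb : 1 ≤ b) (hba : b ≤ a)
    (hlt : ∀ j, a ≤ j → j < p ^ (j - b + 1))
    {t : ℚ_[p]} {ρ : ℝ} (ht : ‖t‖ ≤ ρ) (hρ : (p : ℝ) * ρ ≤ 1) :
    ‖∑ j ∈ Icc a n, ((k.choose j : ℕ) : ℚ_[p]) * t ^ j‖ ≤ ‖(k : ℚ_[p])‖ * ρ ^ b := by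
  have hρ0 : 0 ≤ ρ := le_trans (norm_nonneg t) ht
  apply IsUltrametricDist.norm_sum_le_of_forall_le_of_nonneg (by positivity)
  intro j hj
  rw [Finset.mem_Icc] at hj
  exact term_bound hk hb (le_trans hba hj.1) (hlt j hj.1) ht hρ

lemma expand {k : ℕ} (hk : 1 ≤ k) (t : ℚ_[p]) :
    (1 + t) ^ k = 1 + (k : ℚ_[p]) * t + ∑ j ∈ Icc 2 k, ((k.choose j : ℕ) : ℚ_[p]) * t ^ j := by
  rw [add_comm (1 : ℚ_[p]) t, add_pow]
  simp only [one_pow, mul_one]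
  rw [Finset.range_eq_Ico, ← Finset.sum_Ico_consecutive _ (by omega : 0 ≤ 2) (by omega : 2 ≤ k + 1)]
  have h01 : ∑ j ∈ Finset.Ico 0 2, t ^ j * ((k.choose j : ℕ) : ℚ_[p]) = 1 + (k : ℚ_[p]) * t := by
    rw [show Finset.Ico 0 2 = {0, 1} from rfl]
    rw [Finset.sum_insert (by decide), Finset.sum_singleton]
    simp [mul_comm]
  rw [h01, Finset.Ico_add_one_right_eq_Icc]
  congr 1
  apply Finset.sum_congr rfl
  intro j _
  ring

lemma split_sum (k : ℕ) (t : ℚ_[p]) :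
    ∑ j ∈ Icc 2 k, ((k.choose j : ℕ) : ℚ_[p]) * t ^ j
      = ((k.choose 2 : ℕ) : ℚ_[p]) * t ^ 2 + ((k.choose 3 : ℕ) : ℚ_[p]) * t ^ 3
        + ∑ j ∈ Icc 4 k, ((k.choose j : ℕ) : ℚ_[p]) * t ^ j := by
  have ext : ∀ a : ℕ, (∑ j ∈ Icc a k, ((k.choose j : ℕ) : ℚ_[p]) * t ^ j)
      = ∑ j ∈ Icc a (k + 3), ((k.choose j : ℕ) : ℚ_[p]) * t ^ j := by
    intro a
    apply Finset.sum_subset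
    · apply Finset.Icc_subset_Icc_right
      omega
    · intro x hx hnx
      rw [Finset.mem_Icc] at hx hnx
      have : k < x := by omega
      rw [Nat.choose_eq_zero_of_lt this]
      simp
  rw [ext 2, ext 4]
  rw [← Finset.Ico_add_one_right_eq_Icc 2 (k + 3), ← Finset.Ico_add_one_right_eq_Icc 4 (k + 3)]
  rw [← Finset.sum_Ico_consecutive (fun j => ((k.choose j : ℕ) : ℚ_[p]) * t ^ j)
    (show 2 ≤ 4 by omega) (show 4 ≤ k + 3 + 1 by omega)]
  have h23 : ∑ j ∈ Finset.Ico 2 4, ((k.choose j : ℕ) : ℚ_[p]) * t ^ j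
      = ((k.choose 2 : ℕ) : ℚ_[p]) * t ^ 2 + ((k.choose 3 : ℕ) : ℚ_[p]) * t ^ 3 := by
    rw [show Finset.Ico 2 4 = {2, 3} from rfl]
    rw [Finset.sum_insert (by decide), Finset.sum_singleton]
  rw [h23]

lemma eq_one_of_pow_eq_one (hp3 : 3 ≤ p) {k : ℕ} (hk : 1 ≤ k) {ζ : ℚ_[p]}
    (hζ : ζ ^ k = 1) (h : ‖ζ - 1‖ < 1) : ζ = 1 := by
  by_contra hne
  set s := ζ - 1 with hs
  have hs0 : s ≠ 0 := sub_ne_zero.2 hne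
  have hK0 : (k : ℚ_[p]) ≠ 0 := Nat.cast_ne_zero.2 (by omega)
  have hps : (p : ℝ) * ‖s‖ ≤ 1 := by
    have h' : ‖s‖ < ‖(1 : ℚ_[p])‖ := by simpa using h
    have := p_mul_norm_le hs0 h'
    simpa using this
  have hexp := expand (p := p) hk s
  rw [show (1 : ℚ_[p]) + s = ζ by rw [hs]; ring, hζ] at hexp
  have heq : (k : ℚ_[p]) * s = -(∑ j ∈ Icc 2 k, ((k.choose j : ℕ) : ℚ_[p]) * s ^ j) := by
    linear_combination -hexp
  have hlhs : ‖(k : ℚ_[p]) * s‖ = ‖(k : ℚ_[p])‖ * ‖s‖ := norm_mul _ _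
  have hrhs : ‖∑ j ∈ Icc 2 k, ((k.choose j : ℕ) : ℚ_[p]) * s ^ j‖ ≤ ‖(k : ℚ_[p])‖ * ‖s‖ ^ 2 :=
    sum_bound hk (by omega) le_rfl (fun j hj => nat_lt_pow1 hp3 hj) le_rfl hps
  have hs1 : ‖s‖ < 1 := by simpa using h
  have hslt : ‖(k : ℚ_[p])‖ * ‖s‖ ^ 2 < ‖(k : ℚ_[p])‖ * ‖s‖ := by
    have h1 : 0 < ‖(k : ℚ_[p])‖ := norm_pos_iff.2 hK0
    have h2 : 0 < ‖s‖ := norm_pos_iff.2 hs0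
    nlinarith [mul_pos (mul_pos h1 h2) (sub_pos.2 hs1)]
  rw [heq, norm_neg] at hlhs
  linarith [hrhs, hslt, hlhs.le, hlhs.ge]

lemma norm_eq_one_of_pow_eq_one {k : ℕ} (hk : 1 ≤ k) {ζ : ℚ_[p]} (hζ : ζ ^ k = 1) : ‖ζ‖ = 1 := by
  have h1 : ‖ζ‖ ^ k = 1 := by rw [← norm_pow, hζ, norm_one]
  rcases lt_trichotomy ‖ζ‖ 1 with h | h | h
  · have := pow_lt_one₀ (norm_nonneg ζ) h (by omega : k ≠ 0)
    rw [h1] at this; norm_num at this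
  · exact h
  · have := one_lt_pow₀ h (by omega : k ≠ 0)
    rw [h1] at this; norm_num at this

lemma lip_term {k j : ℕ} (hk : 1 ≤ k) (hj : 2 ≤ j) (hlt : j < p ^ (j - 2 + 1))
    {t₁ t₂ : ℚ_[p]} {ρ : ℝ} (h₁ : ‖t₁‖ ≤ ρ) (h₂ : ‖t₂‖ ≤ ρ) (hρ : (p : ℝ) * ρ ≤ 1) :
    ‖((k.choose j : ℕ) : ℚ_[p]) * (t₂ ^ j - t₁ ^ j)‖ ≤ (‖(k : ℚ_[p])‖ * ρ) * ‖t₁ - t₂‖ := by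
  have hρ0 : 0 ≤ ρ := le_trans (norm_nonneg t₁) h₁
  have hgeom : t₂ ^ j - t₁ ^ j = (∑ i ∈ Finset.range j, t₂ ^ i * t₁ ^ (j - 1 - i)) * (t₂ - t₁) :=
    (geom_sum₂_mul t₂ t₁ j).symm
  have hsumb : ‖∑ i ∈ Finset.range j, t₂ ^ i * t₁ ^ (j - 1 - i)‖ ≤ ρ ^ (j - 1) := by
    apply IsUltrametricDist.norm_sum_le_of_forall_le_of_nonneg (by positivity)
    intro i hi
    rw [Finset.mem_range] at hi
    have hpow : ρ ^ i * ρ ^ (j - 1 - i) = ρ ^ (j - 1) := by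
      rw [← pow_add]
      congr 1
      omega
    calc ‖t₂ ^ i * t₁ ^ (j - 1 - i)‖ = ‖t₂‖ ^ i * ‖t₁‖ ^ (j - 1 - i) := by
          rw [norm_mul, norm_pow, norm_pow]
      _ ≤ ρ ^ i * ρ ^ (j - 1 - i) := by
          apply mul_le_mul (pow_le_pow_left₀ (norm_nonneg _) h₂ _)
            (pow_le_pow_left₀ (norm_nonneg _) h₁ _) (by positivity) (by positivity)
      _ = ρ ^ (j - 1) := hpow
  have hC : ‖((k.choose j : ℕ) : ℚ_[p])‖ ≤ ‖(k : ℚ_[p])‖ * (p : ℝ) ^ (j - 2) :=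
    norm_choose_le hk (by omega) hlt
  have hfact : (p : ℝ) ^ (j - 2) * ρ ^ (j - 1) ≤ ρ := by
    have h1 : ρ ^ (j - 1) = ρ ^ (j - 2) * ρ := by
      rw [← pow_succ]
      congr 1
      omega
    rw [h1, ← mul_assoc, ← mul_pow]
    calc ((p : ℝ) * ρ) ^ (j - 2) * ρ ≤ 1 * ρ := by
          apply mul_le_mul_of_nonneg_right (pow_le_one₀ (by positivity) hρ) hρ0
      _ = ρ := one_mul ρ
  calc ‖((k.choose j : ℕ) : ℚ_[p]) * (t₂ ^ j - t₁ ^ j)‖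
      = ‖((k.choose j : ℕ) : ℚ_[p])‖ * ‖∑ i ∈ Finset.range j, t₂ ^ i * t₁ ^ (j - 1 - i)‖ * ‖t₂ - t₁‖ := by
        rw [hgeom, norm_mul, norm_mul]; ring
    _ ≤ (‖(k : ℚ_[p])‖ * (p : ℝ) ^ (j - 2)) * ρ ^ (j - 1) * ‖t₂ - t₁‖ := by
        apply mul_le_mul_of_nonneg_right _ (norm_nonneg _)
        apply mul_le_mul hC hsumb (norm_nonneg _) (by positivity)
    _ = ‖(k : ℚ_[p])‖ * ((p : ℝ) ^ (j - 2) * ρ ^ (j - 1)) * ‖t₂ - t₁‖ := by ring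
    _ ≤ ‖(k : ℚ_[p])‖ * ρ * ‖t₂ - t₁‖ := by
        apply mul_le_mul_of_nonneg_right _ (norm_nonneg _)
        exact mul_le_mul_of_nonneg_left hfact (norm_nonneg _)
    _ = (‖(k : ℚ_[p])‖ * ρ) * ‖t₁ - t₂‖ := by rw [norm_sub_rev]

lemma exists_root (hp3 : 3 ≤ p) {k : ℕ} (hk : 1 ≤ k) {w : ℚ_[p]}
    (hw : ‖w‖ < ‖(k : ℚ_[p])‖) :
    ∃ t : ℚ_[p], (1 + t) ^ k = 1 + w ∧ ‖t‖ ≤ ‖w‖ / ‖(k : ℚ_[p])‖ := by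
  have hK0 : (k : ℚ_[p]) ≠ 0 := Nat.cast_ne_zero.2 (by omega)
  have hKpos : 0 < ‖(k : ℚ_[p])‖ := norm_pos_iff.2 hK0
  set ρ : ℝ := ‖w‖ / ‖(k : ℚ_[p])‖ with hρdef
  have hρ0 : 0 ≤ ρ := by positivity
  have hρK : ρ * ‖(k : ℚ_[p])‖ = ‖w‖ := div_mul_cancel₀ _ hKpos.ne'
  have hρp : (p : ℝ) * ρ ≤ 1 := by
    rcases eq_or_ne w 0 with rfl | hw0
    · simp [hρdef]
    · have h1 : (p : ℝ) * ‖w‖ ≤ ‖(k : ℚ_[p])‖ := p_mul_norm_le hw0 hw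
      rw [hρdef, ← mul_div_assoc, div_le_one hKpos]
      exact h1
  have hρ1 : ρ < 1 := by
    have hp2 : (2:ℝ) ≤ p := by exact_mod_cast hp.out.two_le
    nlinarith
  set A : ℚ_[p] → ℚ_[p] := fun t => ∑ j ∈ Icc 2 k, ((k.choose j : ℕ) : ℚ_[p]) * t ^ j with hA
  set Φ : ℚ_[p] → ℚ_[p] := fun t => (w - A t) / (k : ℚ_[p]) with hΦ
  set s : Set ℚ_[p] := {t : ℚ_[p] | ‖t‖ ≤ ρ} with hsdef
  have hsc : IsComplete s := by
    have : IsClosed s := isClosed_le continuous_norm continuous_const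
    exact this.isComplete
  have hAb : ∀ t ∈ s, ‖A t‖ ≤ ‖(k : ℚ_[p])‖ * ρ ^ 2 := by
    intro t ht
    exact sum_bound hk (by omega) le_rfl (fun j hj => nat_lt_pow1 hp3 hj) ht hρp
  have hmaps : Set.MapsTo Φ s s := by
    intro t ht
    have h1 : ‖w - A t‖ ≤ ‖w‖ := by
      have h2 : ‖A t‖ ≤ ‖w‖ := by
        have := hAb t ht
        have h3 : ‖(k : ℚ_[p])‖ * ρ ^ 2 ≤ ‖(k : ℚ_[p])‖ * ρ := by nlinarith
        rw [mul_comm (‖(k : ℚ_[p])‖) ρ, hρK] at h3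
        linarith
      calc ‖w - A t‖ ≤ max ‖w‖ ‖A t‖ := nsub_le_max w (A t)
        _ ≤ ‖w‖ := max_le le_rfl h2
    show ‖Φ t‖ ≤ ρ
    rw [hΦ]
    simp only [norm_div]
    rw [div_le_iff₀ hKpos]
    rw [hρdef, div_mul_cancel₀ _ hKpos.ne']
    exact h1
  have hlip : ∀ t₁ ∈ s, ∀ t₂ ∈ s, ‖Φ t₁ - Φ t₂‖ ≤ ρ * ‖t₁ - t₂‖ := by
    intro t₁ h₁ t₂ h₂
    have h₁' : ‖t₁‖ ≤ ρ := h₁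
    have h₂' : ‖t₂‖ ≤ ρ := h₂
    have hdiff : Φ t₁ - Φ t₂ = (A t₂ - A t₁) / (k : ℚ_[p]) := by
      rw [hΦ]; ring
    have hAdiff : A t₂ - A t₁ = ∑ j ∈ Icc 2 k, ((k.choose j : ℕ) : ℚ_[p]) * (t₂ ^ j - t₁ ^ j) := by
      rw [hA, ← Finset.sum_sub_distrib]
      apply Finset.sum_congr rfl
      intro j _; ring
    have hterm : ∀ j ∈ Icc 2 k,
        ‖((k.choose j : ℕ) : ℚ_[p]) * (t₂ ^ j - t₁ ^ j)‖ ≤ (‖(k : ℚ_[p])‖ * ρ) * ‖t₁ - t₂‖ := by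
      intro j hj
      rw [Finset.mem_Icc] at hj
      exact lip_term hk hj.1 (nat_lt_pow1 hp3 hj.1) h₁' h₂' hρp
    have hsum : ‖A t₂ - A t₁‖ ≤ (‖(k : ℚ_[p])‖ * ρ) * ‖t₁ - t₂‖ := by
      rw [hAdiff]
      apply IsUltrametricDist.norm_sum_le_of_forall_le_of_nonneg (by positivity) hterm
    rw [hdiff, norm_div, div_le_iff₀ hKpos]
    calc ‖A t₂ - A t₁‖ ≤ (‖(k : ℚ_[p])‖ * ρ) * ‖t₁ - t₂‖ := hsum
      _ = ρ * ‖t₁ - t₂‖ * ‖(k : ℚ_[p])‖ := by ring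
  have hcontr : ContractingWith ⟨ρ, hρ0⟩ (hmaps.restrict Φ s s) := by
    constructor
    · exact_mod_cast hρ1
    · apply LipschitzWith.of_dist_le_mul
      rintro ⟨a, ha⟩ ⟨b, hb⟩
      have : dist (hmaps.restrict Φ s s ⟨a, ha⟩) (hmaps.restrict Φ s s ⟨b, hb⟩) = dist (Φ a) (Φ b) := rfl
      rw [this, Subtype.dist_eq, dist_eq_norm, dist_eq_norm]
      exact hlip a ha b hb
  have h0s : (0 : ℚ_[p]) ∈ s := by simpa [hsdef] using hρ0
  obtain ⟨t, hts, htfix, -⟩ := hcontr.exists_fixedPoint' hsc hmaps h0s (edist_ne_top _ _)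
  refine ⟨t, ?_, hts⟩
  have hfix : (w - A t) / (k : ℚ_[p]) = t := htfix
  have hKt : (k : ℚ_[p]) * t = w - A t := by
    field_simp at hfix
    linear_combination -hfix
  have hAt : A t = ∑ j ∈ Icc 2 k, ((k.choose j : ℕ) : ℚ_[p]) * t ^ j := rfl
  rw [expand hk t, ← hAt, hKt]
  ring

lemma cast_c2 (k : ℕ) : 2 * ((k.choose 2 : ℕ) : ℚ_[p]) = (k : ℚ_[p]) * ((k : ℚ_[p]) - 1) := by
  rw [Nat.cast_choose_two]
  ring

lemma cast_c3 (k : ℕ) : 6 * ((k.choose 3 : ℕ) : ℚ_[p])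
    = (k : ℚ_[p]) * ((k : ℚ_[p]) - 1) * ((k : ℚ_[p]) - 2) := by
  match k with
  | 0 => norm_num
  | 1 => simp [Nat.choose]
  | (n + 2) =>
    have h := Nat.cast_descFactorial (S := ℚ_[p]) (n + 2) 3
    rw [Nat.descFactorial_eq_factorial_mul_choose] at h
    simp only [show n + 2 - (3 - 1) = n from by omega] at h
    simp [ascPochhammer_succ_right, ascPochhammer_zero, Nat.factorial] at h
    push_cast at h ⊢
    rw [h]
    ring

lemma norm_two_eq (hp3 : 3 ≤ p) : ‖(2 : ℚ_[p])‖ = 1 := by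
  have h1 : ‖((2 : ℕ) : ℚ_[p])‖ ≤ 1 := norm_natCast_le_one 2
  have h2 : 1 ≤ (p : ℝ) ^ 0 * ‖((2 : ℕ) : ℚ_[p])‖ :=
    one_le_pow_mul_norm 2 0 (by omega) (by rw [pow_one]; omega)
  simp only [pow_zero, one_mul] at h2
  have : ((2 : ℕ) : ℚ_[p]) = (2 : ℚ_[p]) := by norm_cast
  rw [this] at h1 h2
  linarith

lemma norm_six_ge (hp3 : 3 ≤ p) : 1 ≤ (p : ℝ) * ‖(6 : ℚ_[p])‖ := by
  have h2 : 1 ≤ (p : ℝ) ^ 1 * ‖((6 : ℕ) : ℚ_[p])‖ := by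
    apply one_le_pow_mul_norm 6 1 (by omega)
    have : p ^ (1 + 1) = p * p := by ring
    nlinarith
  have : ((6 : ℕ) : ℚ_[p]) = (6 : ℚ_[p]) := by norm_cast
  rw [this, pow_one] at h2
  exact h2

end Stmt15Aux


open Stmt15Aux in
set_option maxHeartbeats 1000000 in
open Finset in
theorem stmt15 (p : ℕ) [Fact p.Prime] (hp : 3 ≤ p) (q k : ℕ) (hq : 1 ≤ q) (hk : 1 ≤ k)
    (θ : ℚ_[p]) (hqk : ‖(q : ℚ_[p])‖ < ‖(k : ℚ_[p])‖)
    (hθq : ‖θ - 1‖ < ‖(q : ℚ_[p])‖ ^ 2) (hq2 : ‖(q : ℚ_[p])‖ ^ 2 < 1) :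
    ∀ ξ ξ' : ℚ_[p], ξ ^ k = 1 → ξ' ^ k = 1 →
      ∀ y : ℚ_[p], ‖y - xiCenter p q k θ ξ‖ < ‖(q : ℚ_[p]) * (θ - 1)‖ →
        ∃ x : ℚ_[p], ‖x - xiCenter p q k θ ξ'‖ < ‖(q : ℚ_[p]) * (θ - 1)‖ ∧
          pottsBethe p q k θ x = y := by
  intro ξ ξ' hξ hξ' y hy
  have hp3 : 3 ≤ p := hp
  set Q : ℚ_[p] := (q : ℚ_[p]) with hQdef
  set K : ℚ_[p] := (k : ℚ_[p]) with hKdef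
  have hQ0 : Q ≠ 0 := Nat.cast_ne_zero.2 (by omega)
  have hK0 : K ≠ 0 := Nat.cast_ne_zero.2 (by omega)
  have hQpos : 0 < ‖Q‖ := norm_pos_iff.2 hQ0
  have hKpos : 0 < ‖K‖ := norm_pos_iff.2 hK0
  have hKle1 : ‖K‖ ≤ 1 := norm_natCast_le_one k
  have hQle1 : ‖Q‖ ≤ 1 := norm_natCast_le_one q
  have hQlt1 : ‖Q‖ < 1 := by nlinarith
  have hτ0 : θ - 1 ≠ 0 := by
    intro h
    rw [h] at hy
    simp only [mul_zero, norm_zero] at hy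
    exact absurd (norm_nonneg _) (not_le.2 hy)
  set τ : ℚ_[p] := θ - 1 with hτdef
  have hτpos : 0 < ‖τ‖ := norm_pos_iff.2 hτ0
  have hθexp : θ = 1 + τ := by rw [hτdef]; ring
  have hr : ‖Q * τ‖ = ‖Q‖ * ‖τ‖ := norm_mul Q τ
  rw [hr] at hy
  have hτQ2 : ‖τ‖ < ‖Q‖ ^ 2 := hθq
  have hτQ : ‖τ‖ < ‖Q‖ := by
    calc ‖τ‖ < ‖Q‖ ^ 2 := hτQ2
      _ = ‖Q‖ * ‖Q‖ := by ring
      _ ≤ ‖Q‖ * 1 := mul_le_mul_of_nonneg_left hQle1 hQpos.le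
      _ = ‖Q‖ := mul_one _
  have hτ1 : ‖τ‖ < 1 := hτQ.trans_le hQle1
  set ρ : ℝ := ‖Q‖ / ‖K‖ with hρdef
  have hρpos : 0 < ρ := by positivity
  have hρK : ρ * ‖K‖ = ‖Q‖ := div_mul_cancel₀ _ hKpos.ne'
  have hρlt1 : ρ < 1 := (div_lt_one hKpos).2 hqk
  have hQρ : ‖Q‖ ≤ ρ := by
    rw [hρdef, le_div_iff₀ hKpos]
    calc ‖Q‖ * ‖K‖ ≤ ‖Q‖ * 1 := mul_le_mul_of_nonneg_left hKle1 hQpos.le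
      _ = ‖Q‖ := mul_one _
  have hpQK : (p : ℝ) * ‖Q‖ ≤ ‖K‖ := p_mul_norm_le hQ0 hqk
  have hpρ : (p : ℝ) * ρ ≤ 1 := by
    rw [hρdef, ← mul_div_assoc, div_le_one hKpos]
    exact hpQK
  have hQ2ρ : ‖Q‖ ^ 2 ≤ ‖Q‖ * ρ := by
    calc ‖Q‖ ^ 2 = ‖Q‖ * ‖Q‖ := by ring
      _ ≤ ‖Q‖ * ρ := mul_le_mul_of_nonneg_left hQρ hQpos.le
  have h2n : ‖(2 : ℚ_[p])‖ = 1 := norm_two_eq hp3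
  have h6 : 1 ≤ (p : ℝ) * ‖(6 : ℚ_[p])‖ := norm_six_ge hp3
  have h6pos : 0 < ‖(6 : ℚ_[p])‖ := norm_pos_iff.2 (by norm_num)
  have hK1' : ‖K - 1‖ ≤ 1 := by
    refine (nsub_le_max K 1).trans ?_
    rw [norm_one]
    exact max_le hKle1 le_rfl
  have hK2' : ‖K - 2‖ ≤ 1 := by
    refine (nsub_le_max K 2).trans ?_
    rw [h2n]
    exact max_le hKle1 le_rfl
  -- the norm of C
  have hCnorm : ‖1 - Q / 2 + (K - 2) * Q ^ 2 / (6 * K)‖ ≤ 1 := by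
    have hQ2 : ‖Q / 2‖ ≤ 1 := by
      rw [norm_div, h2n, div_one]
      exact hQle1
    have hterm : ‖(K - 2) * Q ^ 2 / (6 * K)‖ ≤ 1 := by
      rw [norm_div, norm_mul, norm_mul, norm_pow, div_le_one (by positivity)]
      calc ‖K - 2‖ * ‖Q‖ ^ 2 ≤ 1 * ‖Q‖ ^ 2 := mul_le_mul_of_nonneg_right hK2' (by positivity)
        _ = ‖Q‖ * ‖Q‖ := by ring
        _ ≤ 1 * ‖Q‖ := mul_le_mul_of_nonneg_right hQle1 hQpos.le
        _ = ‖Q‖ := one_mul _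
        _ ≤ ((p : ℝ) * ‖(6 : ℚ_[p])‖) * ‖Q‖ := le_mul_of_one_le_left hQpos.le h6
        _ = ‖(6 : ℚ_[p])‖ * ((p : ℝ) * ‖Q‖) := by ring
        _ ≤ ‖(6 : ℚ_[p])‖ * ‖K‖ := mul_le_mul_of_nonneg_left hpQK h6pos.le
    refine (nadd_le_max _ _).trans (max_le ((nsub_le_max _ _).trans (max_le ?_ hQ2)) hterm)
    rw [norm_one]
  -- roots of unity facts
  have hroot_norm : ∀ ζ' : ℚ_[p], ζ' ^ k = 1 → ζ' ≠ 1 → ‖1 - ζ'‖ = 1 := by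
    intro ζ' hζ' hne
    refine le_antisymm ((nsub_le_max _ _).trans ?_) ?_
    · rw [norm_eq_one_of_pow_eq_one hk hζ', norm_one]
      simp
    · by_contra hc
      push_neg at hc
      refine hne (eq_one_of_pow_eq_one hp3 hk hζ' ?_)
      rw [norm_sub_rev] at hc
      exact hc
  -- distance of center to 1 - Q
  have hxc : ‖xiCenter p q k θ ξ - (1 - Q)‖ ≤ ‖τ‖ := by
    by_cases hξ1 : ξ = 1
    · have hxc1 : xiCenter p q k θ ξ = 1 - Q + (K - 1) *
          (1 - Q / 2 + (K - 2) * Q ^ 2 / (6 * K)) * τ := by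
        rw [hξ1, hQdef, hKdef, hτdef]
        unfold xiCenter
        rw [if_pos rfl]
      rw [hxc1]
      have heq : (1 - Q + (K - 1) * (1 - Q / 2 + (K - 2) * Q ^ 2 / (6 * K)) * τ) - (1 - Q)
          = (K - 1) * (1 - Q / 2 + (K - 2) * Q ^ 2 / (6 * K)) * τ := by ring
      rw [heq, norm_mul, norm_mul]
      calc ‖K - 1‖ * ‖1 - Q / 2 + (K - 2) * Q ^ 2 / (6 * K)‖ * ‖τ‖
          ≤ 1 * 1 * ‖τ‖ := by
            apply mul_le_mul_of_nonneg_right _ (norm_nonneg τ)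
            exact mul_le_mul hK1' hCnorm (norm_nonneg _) zero_le_one
        _ = ‖τ‖ := by ring
    · have hxc2 : xiCenter p q k θ ξ = 2 - Q - θ + Q * τ / (1 - ξ) := by
        rw [hQdef, hτdef]
        unfold xiCenter
        rw [if_neg hξ1]
      rw [hxc2]
      have h1ξ : ‖1 - ξ‖ = 1 := hroot_norm ξ hξ hξ1
      have heq : (2 - Q - θ + Q * τ / (1 - ξ)) - (1 - Q) = -τ + Q * τ / (1 - ξ) := by
        rw [hτdef]; ring
      rw [heq]
      refine (nadd_le_max _ _).trans (max_le ?_ ?_)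
      · rw [norm_neg]
      · rw [norm_div, norm_mul, h1ξ, div_one]
        calc ‖Q‖ * ‖τ‖ ≤ 1 * ‖τ‖ := mul_le_mul_of_nonneg_right hQle1 (norm_nonneg τ)
          _ = ‖τ‖ := one_mul _
  -- w and e
  set w : ℚ_[p] := y - 1 with hwdef
  have he : ‖w + Q‖ ≤ ‖τ‖ := by
    have hsplit : w + Q = (y - xiCenter p q k θ ξ) + (xiCenter p q k θ ξ - (1 - Q)) := by
      rw [hwdef]; ring
    rw [hsplit]
    refine (nadd_le_max _ _).trans (max_le ?_ hxc)
    calc ‖y - xiCenter p q k θ ξ‖ ≤ ‖Q‖ * ‖τ‖ := hy.le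
      _ ≤ 1 * ‖τ‖ := mul_le_mul_of_nonneg_right hQle1 (norm_nonneg τ)
      _ = ‖τ‖ := one_mul _
  have hwQ : ‖w‖ = ‖Q‖ := by
    have h1 : ‖w - (-Q)‖ < ‖-Q‖ := by
      rw [norm_neg, sub_neg_eq_add]
      calc ‖w + Q‖ ≤ ‖τ‖ := he
        _ < ‖Q‖ := hτQ
    rw [norm_eq_right h1, norm_neg]
  -- the k-th root
  obtain ⟨t, ht, htle⟩ := exists_root hp3 hk (show ‖w‖ < ‖K‖ by rw [hwQ]; exact hqk)
  have htρ : ‖t‖ ≤ ρ := by rw [hρdef, ← hwQ]; exact htle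
  set A : ℚ_[p] := ∑ j ∈ Icc 2 k, ((k.choose j : ℕ) : ℚ_[p]) * t ^ j with hAdef
  have hKt : K * t = w - A := by
    have h1 := expand (p := p) hk t
    rw [ht] at h1
    linear_combination -h1
  have hAb : ‖A‖ ≤ ‖K‖ * ρ ^ 2 :=
    sum_bound hk (by omega) le_rfl (fun j hj => nat_lt_pow1 hp3 hj) htρ hpρ
  set A4 : ℚ_[p] := ∑ j ∈ Icc 4 k, ((k.choose j : ℕ) : ℚ_[p]) * t ^ j with hA4def
  have hA4b : ‖A4‖ ≤ ‖K‖ * ρ ^ 3 :=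
    sum_bound hk (by omega) (by omega) (fun j hj => nat_lt_pow2 hp3 hj) htρ hpρ
  have hsplitA : A = ((k.choose 2 : ℕ) : ℚ_[p]) * t ^ 2 + ((k.choose 3 : ℕ) : ℚ_[p]) * t ^ 3 + A4 :=
    split_sum k t
  have hKρ2 : ‖K‖ * ρ ^ 2 = ‖Q‖ * ρ := by rw [← hρK]; ring
  have hKtQ : ‖K * t + Q‖ ≤ ‖K‖ * ρ ^ 2 := by
    have h1 : K * t + Q = (w + Q) - A := by rw [hKt]; ring
    rw [h1]
    refine (nsub_le_max _ _).trans (max_le ?_ hAb)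
    calc ‖w + Q‖ ≤ ‖τ‖ := he
      _ ≤ ‖Q‖ ^ 2 := hτQ2.le
      _ = (‖K‖ * ρ) * (‖K‖ * ρ) := by rw [mul_comm ‖K‖ ρ, hρK]; ring
      _ ≤ 1 * (‖K‖ * (‖K‖ * ρ * ρ)) := by
          have h2 : (‖K‖ * ρ) * (‖K‖ * ρ) = ‖K‖ * (‖K‖ * ρ * ρ) := by ring
          rw [h2, one_mul]
      _ ≤ ‖K‖ * ρ ^ 2 := by
          rw [one_mul]
          have h3 : ‖K‖ * (‖K‖ * ρ * ρ) ≤ 1 * (‖K‖ * ρ * ρ) :=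
            mul_le_mul_of_nonneg_right hKle1 (by positivity)
          calc ‖K‖ * (‖K‖ * ρ * ρ) ≤ 1 * (‖K‖ * ρ * ρ) := h3
            _ = ‖K‖ * ρ ^ 2 := by ring
  have hKρ2Q : ‖K‖ * ρ ^ 2 < ‖Q‖ := by
    rw [hKρ2]
    calc ‖Q‖ * ρ < ‖Q‖ * 1 := mul_lt_mul_of_pos_left hρlt1 hQpos
      _ = ‖Q‖ := mul_one _
  have hKtn : ‖K * t‖ = ‖Q‖ := by
    have h1 : ‖K * t - w‖ < ‖w‖ := by
      have h2 : K * t - w = -A := by rw [hKt]; ring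
      rw [h2, norm_neg, hwQ]
      exact lt_of_le_of_lt hAb hKρ2Q
    rw [norm_eq_right h1, hwQ]
  have htn : ‖t‖ = ρ := by
    rw [hρdef, eq_div_iff hKpos.ne', mul_comm, ← norm_mul]
    exact hKtn
  have hQKt : ‖Q - K * t‖ ≤ ‖Q‖ := by
    refine (nsub_le_max _ _).trans (max_le le_rfl ?_)
    rw [hKtn]
  -- the root of y
  set ζ : ℚ_[p] := ξ' * (1 + t) with hζdef
  have hζk : ζ ^ k = y := by
    rw [hζdef, mul_pow, hξ', one_mul, ht, hwdef]
    ring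
  set x : ℚ_[p] := 2 - Q - θ + τ * (θ + Q - 1) / (θ - ζ) with hxdef
  have hQτ0 : θ + Q - 1 ≠ 0 := by
    have h1 : ‖(θ + Q - 1) - Q‖ < ‖Q‖ := by
      have h2 : θ + Q - 1 - Q = τ := by rw [hτdef]; ring
      rw [h2]; exact hτQ
    have h3 := norm_eq_right h1
    intro hcon
    rw [hcon, norm_zero] at h3
    exact absurd h3.symm (ne_of_gt hQpos)
  have key : θ - ζ ≠ 0 → pottsBethe p q k θ x = y := by
    intro h0
    have hD : x + θ + Q - 2 = τ * (θ + Q - 1) / (θ - ζ) := by rw [hxdef]; ring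
    have hD0 : τ * (θ + Q - 1) / (θ - ζ) ≠ 0 :=
      div_ne_zero (mul_ne_zero hτ0 hQτ0) h0
    have hN : θ * x + Q - 1 = ζ * (τ * (θ + Q - 1) / (θ - ζ)) := by
      rw [hxdef, hτdef]
      field_simp
      ring
    show ((θ * x + Q - 1) / (x + θ + Q - 2)) ^ k = y
    rw [hD, hN, mul_div_assoc, div_self hD0, mul_one, hζk]
  by_cases hξ'1 : ξ' = 1
  · -- case ξ' = 1
    subst hξ'1
    have hθζ : θ - ζ = τ - t := by rw [hζdef, hτdef]; ring
    have hdn : ‖τ - t‖ = ρ := by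
      have h1 : ‖(τ - t) - (-t)‖ < ‖-t‖ := by
        rw [norm_neg, htn]
        have h2 : τ - t - (-t) = τ := by ring
        rw [h2]
        exact hτQ.trans_le hQρ
      rw [norm_eq_right h1, norm_neg, htn]
    have hd0 : τ - t ≠ 0 := by
      intro hcon
      rw [hcon, norm_zero] at hdn
      exact absurd hdn.symm (ne_of_gt hρpos)
    refine ⟨x, ?_, key (by rw [hθζ]; exact hd0)⟩
    rw [hr]
    have hxc1 : xiCenter p q k θ 1 = 1 - Q + (K - 1) *
        (1 - Q / 2 + (K - 2) * Q ^ 2 / (6 * K)) * τ := by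
      rw [hQdef, hKdef, hτdef]
      unfold xiCenter
      rw [if_pos rfl]
    set C : ℚ_[p] := 1 - Q / 2 + (K - 2) * Q ^ 2 / (6 * K) with hCdef
    set S : ℚ_[p] := 1 + (K - 1) * C with hSdef
    set E : ℚ_[p] := (Q + τ) - (τ - t) * S with hEdef
    have hxdiff : x - xiCenter p q k θ 1 = τ * E / (τ - t) := by
      rw [hxc1, hxdef, hθζ, hEdef, hSdef, hCdef, hθexp]
      field_simp [hd0, hK0]
      ring
    have hA4eq : A4 = w - K * t - ((k.choose 2 : ℕ) : ℚ_[p]) * t ^ 2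
        - ((k.choose 3 : ℕ) : ℚ_[p]) * t ^ 3 := by
      rw [hKt, hsplitA]
      ring
    have hc2 : ((k.choose 2 : ℕ) : ℚ_[p]) = K * (K - 1) / 2 := by
      have h1 := cast_c2 (p := p) k
      rw [eq_div_iff (two_ne_zero)]
      linear_combination h1
    have hc3 : ((k.choose 3 : ℕ) : ℚ_[p]) = K * (K - 1) * (K - 2) / 6 := by
      have h1 := cast_c3 (p := p) k
      rw [eq_div_iff (by norm_num : (6 : ℚ_[p]) ≠ 0)]
      linear_combination h1
    set S6 : ℚ_[p] := 6 * K + (K - 1) * (6 * K - 3 * K * Q + (K - 2) * Q ^ 2) with hS6def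
    have hS6 : 6 * K * S = S6 := by
      rw [hSdef, hCdef, hS6def]
      field_simp
      ring
    set E6 : ℚ_[p] := 6 * K * (Q + τ) - (τ - t) * S6 with hE6def
    have hE6E : E6 = 6 * K * E := by
      rw [hE6def, hEdef]
      linear_combination (τ - t) * hS6
    have hEeq6 : E6 = 6 * K * (τ * (1 - S)) + 6 * K * (w + Q) - 6 * K * A4
        + (-(3 * K * (K - 1) * t * (K * t + Q)))
        + ((K - 1) * (K - 2) * t * ((Q - K * t) * (Q + K * t))) := by
      rw [hE6def, hA4eq]
      linear_combination τ * hS6 + (-(3 * K * t ^ 2)) * (cast_c2 (p := p) k)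
        + (-(K * t ^ 3)) * (cast_c3 (p := p) k)
    have h1S : ‖1 - S‖ ≤ 1 := by
      have h2 : (1 : ℚ_[p]) - S = -((K - 1) * C) := by rw [hSdef]; ring
      rw [h2, norm_neg, norm_mul]
      calc ‖K - 1‖ * ‖C‖ ≤ 1 * 1 := mul_le_mul hK1' hCnorm (norm_nonneg _) zero_le_one
        _ = 1 := mul_one 1
    have h6K0 : (6 : ℚ_[p]) * K ≠ 0 := mul_ne_zero (by norm_num) hK0
    have h6Kpos : 0 < ‖(6 : ℚ_[p]) * K‖ := norm_pos_iff.2 h6K0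
    have hb1 : ‖τ * (1 - S)‖ < ‖Q‖ * ρ := by
      rw [norm_mul]
      calc ‖τ‖ * ‖1 - S‖ ≤ ‖τ‖ * 1 := mul_le_mul_of_nonneg_left h1S hτpos.le
        _ = ‖τ‖ := mul_one _
        _ < ‖Q‖ ^ 2 := hτQ2
        _ ≤ ‖Q‖ * ρ := hQ2ρ
    have hb2 : ‖w + Q‖ < ‖Q‖ * ρ := by
      calc ‖w + Q‖ ≤ ‖τ‖ := he
        _ < ‖Q‖ ^ 2 := hτQ2
        _ ≤ ‖Q‖ * ρ := hQ2ρ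
    have hKρ3 : ‖K‖ * ρ ^ 3 < ‖Q‖ * ρ := by
      have h1 : ‖K‖ * ρ ^ 3 = (‖Q‖ * ρ) * ρ := by rw [← hρK]; ring
      rw [h1]
      calc (‖Q‖ * ρ) * ρ < (‖Q‖ * ρ) * 1 := mul_lt_mul_of_pos_left hρlt1 (by positivity)
        _ = ‖Q‖ * ρ := mul_one _
    have hb3 : ‖A4‖ < ‖Q‖ * ρ := lt_of_le_of_lt hA4b hKρ3
    have hQKt' : ‖Q + K * t‖ ≤ ‖K‖ * ρ ^ 2 := by
      rw [add_comm]; exact hKtQ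
    have h63 : ‖(6 : ℚ_[p])‖ = ‖(3 : ℚ_[p])‖ := by
      have h6eq : (6 : ℚ_[p]) = 2 * 3 := by norm_num
      rw [h6eq, norm_mul, h2n, one_mul]
    have hρp' : ρ ≤ ((p : ℝ))⁻¹ := by
      have hppos : (0 : ℝ) < p := by positivity
      rw [inv_eq_one_div, le_div_iff₀ hppos]
      linarith [hpρ]
    -- bound on scaled terms
    have hc4 : ‖-(3 * K * (K - 1) * t * (K * t + Q))‖ < ‖(6 : ℚ_[p]) * K‖ * (‖Q‖ * ρ) := by
      rw [norm_neg, norm_mul, norm_mul, norm_mul, norm_mul, norm_mul (6 : ℚ_[p]) K, h63]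
      calc ‖(3 : ℚ_[p])‖ * ‖K‖ * ‖K - 1‖ * ‖t‖ * ‖K * t + Q‖
          ≤ ‖(3 : ℚ_[p])‖ * ‖K‖ * 1 * ρ * (‖K‖ * ρ ^ 2) := by
            apply mul_le_mul _ hKtQ (norm_nonneg _) (by positivity)
            apply mul_le_mul _ htρ (norm_nonneg _) (by positivity)
            exact mul_le_mul_of_nonneg_left hK1' (by positivity)
        _ = (‖(3 : ℚ_[p])‖ * ‖K‖) * (‖K‖ * ρ ^ 2 * ρ) := by ring
        _ < (‖(3 : ℚ_[p])‖ * ‖K‖) * (‖K‖ * ρ ^ 2 * 1) := by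
            apply mul_lt_mul_of_pos_left _ (mul_pos (norm_pos_iff.2 (by norm_num : (3 : ℚ_[p]) ≠ 0)) hKpos)
            exact mul_lt_mul_of_pos_left hρlt1 (mul_pos hKpos (pow_pos hρpos 2))
        _ = ‖(3 : ℚ_[p])‖ * ‖K‖ * (‖Q‖ * ρ) := by rw [mul_one, hKρ2]
    have hc5 : ‖(K - 1) * (K - 2) * t * ((Q - K * t) * (Q + K * t))‖
        < ‖(6 : ℚ_[p]) * K‖ * (‖Q‖ * ρ) := by
      rw [norm_mul, norm_mul, norm_mul, norm_mul]
      have step : ‖K - 1‖ * ‖K - 2‖ * ‖t‖ * (‖Q - K * t‖ * ‖Q + K * t‖)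
          ≤ ρ * (‖Q‖ * (‖K‖ * ρ ^ 2)) := by
        calc ‖K - 1‖ * ‖K - 2‖ * ‖t‖ * (‖Q - K * t‖ * ‖Q + K * t‖)
            ≤ 1 * 1 * ρ * (‖Q‖ * (‖K‖ * ρ ^ 2)) := by
              apply mul_le_mul _ _ (by positivity) (by positivity)
              · apply mul_le_mul _ htρ (norm_nonneg _) (by positivity)
                exact mul_le_mul hK1' hK2' (norm_nonneg _) zero_le_one
              · exact mul_le_mul hQKt hQKt' (norm_nonneg _) hQpos.le
          _ = ρ * (‖Q‖ * (‖K‖ * ρ ^ 2)) := by ring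
      refine lt_of_le_of_lt step ?_
      have hstrict : ρ * (‖Q‖ * (‖K‖ * ρ ^ 2)) < (((p : ℝ))⁻¹ * ‖K‖) * (‖Q‖ * ρ) := by
        have e1 : ρ * (‖Q‖ * (‖K‖ * ρ ^ 2)) = (ρ * ρ) * (ρ * (‖K‖ * ‖Q‖)) := by ring
        have e2 : (((p : ℝ))⁻¹ * ‖K‖) * (‖Q‖ * ρ) = ((p : ℝ))⁻¹ * (ρ * (‖K‖ * ‖Q‖)) := by ring
        rw [e1, e2]
        apply mul_lt_mul_of_pos_right _ (by positivity)
        calc ρ * ρ ≤ ((p : ℝ))⁻¹ * ((p : ℝ))⁻¹ := by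
              apply mul_le_mul hρp' hρp' hρpos.le (by positivity)
          _ < ((p : ℝ))⁻¹ * 1 := by
              apply mul_lt_mul_of_pos_left _ (by positivity)
              rw [inv_lt_one_iff₀]
              right
              exact_mod_cast by omega
          _ = ((p : ℝ))⁻¹ := mul_one _
      refine lt_of_lt_of_le hstrict ?_
      rw [norm_mul]
      apply mul_le_mul_of_nonneg_right _ (by positivity)
      apply mul_le_mul_of_nonneg_right _ hKpos.le
      rw [inv_le_iff_one_le_mul₀ (by positivity)]
      linarith [h6]
    have hE6 : ‖E6‖ < ‖(6 : ℚ_[p]) * K‖ * (‖Q‖ * ρ) := by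
      rw [hEeq6]
      have m1 : ∀ z : ℚ_[p], ‖z‖ < ‖Q‖ * ρ → ‖6 * K * z‖ < ‖(6 : ℚ_[p]) * K‖ * (‖Q‖ * ρ) := by
        intro z hz
        rw [norm_mul]
        exact mul_lt_mul_of_pos_left hz h6Kpos
      have s1 := lt_of_le_of_lt
        (nadd_le_max (6 * K * (τ * (1 - S))) (6 * K * (w + Q)))
        (max_lt (m1 _ hb1) (m1 _ hb2))
      have s2 := lt_of_le_of_lt
        (nsub_le_max (6 * K * (τ * (1 - S)) + 6 * K * (w + Q)) (6 * K * A4))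
        (max_lt s1 (m1 _ hb3))
      have s3 := lt_of_le_of_lt
        (nadd_le_max (6 * K * (τ * (1 - S)) + 6 * K * (w + Q) - 6 * K * A4)
          (-(3 * K * (K - 1) * t * (K * t + Q))))
        (max_lt s2 hc4)
      exact lt_of_le_of_lt
        (nadd_le_max (6 * K * (τ * (1 - S)) + 6 * K * (w + Q) - 6 * K * A4
            + -(3 * K * (K - 1) * t * (K * t + Q)))
          ((K - 1) * (K - 2) * t * ((Q - K * t) * (Q + K * t))))
        (max_lt s3 hc5)
    have hE : ‖E‖ < ‖Q‖ * ρ := by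
      have h1 : ‖E6‖ = ‖(6 : ℚ_[p]) * K‖ * ‖E‖ := by rw [hE6E, norm_mul]
      rw [h1] at hE6
      exact lt_of_mul_lt_mul_left hE6 h6Kpos.le
    rw [hxdiff, norm_div, norm_mul, hdn, div_lt_iff₀ hρpos]
    calc ‖τ‖ * ‖E‖ < ‖τ‖ * (‖Q‖ * ρ) := mul_lt_mul_of_pos_left hE hτpos
      _ = ‖Q‖ * ‖τ‖ * ρ := by ring
  · -- case ξ' ≠ 1
    have hξ'n : ‖ξ'‖ = 1 := norm_eq_one_of_pow_eq_one hk hξ'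
    have h1ξ : ‖1 - ξ'‖ = 1 := hroot_norm ξ' hξ' hξ'1
    have h1ξ0 : 1 - ξ' ≠ 0 := by
      intro hcon
      rw [hcon, norm_zero] at h1ξ
      norm_num at h1ξ
    have hθζeq : θ - ζ = (1 - ξ') + (τ - ξ' * t) := by rw [hζdef, hτdef]; ring
    have hsm : ‖τ - ξ' * t‖ ≤ ρ := by
      refine (nsub_le_max _ _).trans (max_le ?_ ?_)
      · exact (hτQ.trans_le hQρ).le
      · rw [norm_mul, hξ'n, one_mul]
        exact htρ
    have hθζn : ‖θ - ζ‖ = 1 := by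
      have h1 : ‖(θ - ζ) - (1 - ξ')‖ < ‖1 - ξ'‖ := by
        rw [h1ξ]
        have h2 : (θ - ζ) - (1 - ξ') = τ - ξ' * t := by rw [hθζeq]; ring
        rw [h2]
        exact lt_of_le_of_lt hsm hρlt1
      rw [norm_eq_right h1, h1ξ]
    have hθζ0 : θ - ζ ≠ 0 := by
      intro hcon
      rw [hcon, norm_zero] at hθζn
      norm_num at hθζn
    refine ⟨x, ?_, key hθζ0⟩
    rw [hr]
    have hxc' : xiCenter p q k θ ξ' = 2 - Q - θ + Q * τ / (1 - ξ') := by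
      rw [hQdef, hτdef]
      unfold xiCenter
      rw [if_neg hξ'1]
    set Num : ℚ_[p] := τ * (1 - ξ') - Q * τ + Q * (ξ' * t) with hNumdef
    have hθζ0' : (1 - ξ') + (τ - ξ' * t) ≠ 0 := by
      rw [← hθζeq]; exact hθζ0
    have hxdiff : x - xiCenter p q k θ ξ' = τ * Num / ((θ - ζ) * (1 - ξ')) := by
      rw [hxc', hxdef, hθζeq, hNumdef, hθexp]
      field_simp [hθζ0', h1ξ0]
      ring
    have hNum : ‖Num‖ < ‖Q‖ := by
      have n1 : ‖τ * (1 - ξ')‖ < ‖Q‖ := by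
        rw [norm_mul, h1ξ, mul_one]
        exact hτQ
      have n2 : ‖Q * τ‖ < ‖Q‖ := by
        rw [norm_mul]
        calc ‖Q‖ * ‖τ‖ < ‖Q‖ * 1 := mul_lt_mul_of_pos_left hτ1 hQpos
          _ = ‖Q‖ := mul_one _
      have n3 : ‖Q * (ξ' * t)‖ < ‖Q‖ := by
        rw [norm_mul, norm_mul, hξ'n, one_mul]
        calc ‖Q‖ * ‖t‖ ≤ ‖Q‖ * ρ := mul_le_mul_of_nonneg_left htρ hQpos.le
          _ < ‖Q‖ * 1 := mul_lt_mul_of_pos_left hρlt1 hQpos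
          _ = ‖Q‖ := mul_one _
      rw [hNumdef]
      exact lt_of_le_of_lt (nadd_le_max _ _)
        (max_lt (lt_of_le_of_lt (nsub_le_max _ _) (max_lt n1 n2)) n3)
    rw [hxdiff, norm_div, norm_mul, norm_mul, hθζn, h1ξ]
    calc ‖τ‖ * ‖Num‖ / (1 * 1) = ‖Num‖ * ‖τ‖ := by ring
      _ < ‖Q‖ * ‖τ‖ := mul_lt_mul_of_pos_right hNum hτpos
end
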